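/- arXiv:2303.05478 — 10 statements merged into one kernel-verified Lean document; each statement's English description precedes it below -/
import Mathlib

section
/- Let 0 ≤ c < 1/√5 be fixed, and let x, y ∈ (-1,1) have the same sign with |x| ≤ |y| and pseudo-hyperbolic distance ϱ(x,y) := |x-y|/|1-xy| ≤ c. Then 1/(1-y²) ≤ (1 - 2ϱ(x,y)/√(1-c²))⁻¹ · 1/(1-x²). -/
set_option maxHeartbeats 1000000 in
theorem stmt_1 (c : ℝ) (hc : 0 ≤ c) (hc' : c < 1/Real.sqrt 5)
    (x y : ℝ) (hx : x ∈ Set.Ioo (-1:ℝ) 1) (hy : y ∈ Set.Ioo (-1:ℝ) 1)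
    (hsign : 0 ≤ x * y) (hxy : |x| ≤ |y|)
    (hρ : |x - y| / |1 - x*y| ≤ c) :
    1/(1 - y^2) ≤ (1 - 2*(|x - y| / |1 - x*y|)/Real.sqrt (1 - c^2))⁻¹ * (1/(1 - x^2)) := by
  obtain ⟨hx1, hx2⟩ := hx
  obtain ⟨hy1, hy2⟩ := hy
  set a := |x| with ha
  set b := |y| with hb
  have ha0 : 0 ≤ a := abs_nonneg x
  have hb0 : 0 ≤ b := abs_nonneg y
  have ha1 : a < 1 := abs_lt.mpr ⟨hx1, hx2⟩
  have hb1 : b < 1 := abs_lt.mpr ⟨hy1, hy2⟩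
  have hab : a ≤ b := hxy
  have hxa : x^2 = a^2 := (sq_abs x).symm
  have hyb : y^2 = b^2 := (sq_abs y).symm
  have hxyab : x * y = a * b := by
    rw [ha, hb, ← abs_mul, abs_of_nonneg hsign]
  have hab1 : a * b < 1 := by nlinarith
  have hsub : |x - y| = b - a := by
    have h2 : |x - y| ^ 2 = (b - a)^2 := by
      rw [sq_abs]
      have e1 := sq_abs x
      have e2 := sq_abs y
      nlinarith [hxyab]
    calc |x - y| = Real.sqrt (|x - y|^2) := (Real.sqrt_sq (abs_nonneg _)).symm
      _ = Real.sqrt ((b-a)^2) := by rw [h2]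
      _ = b - a := Real.sqrt_sq (by linarith)
  have habs1 : |1 - x * y| = 1 - a * b := by
    rw [hxyab, abs_of_pos (by linarith)]
  rw [hsub, habs1] at hρ ⊢
  clear_value a b
  clear ha hb hsub habs1 hsign hxy hxyab
  set s := Real.sqrt (1 - c^2) with hsdef
  have h5 : (0:ℝ) < Real.sqrt 5 := Real.sqrt_pos.mpr (by norm_num)
  have h5sq : Real.sqrt 5 ^ 2 = 5 := Real.sq_sqrt (by norm_num)
  have hc5 : c * Real.sqrt 5 < 1 := (lt_div_iff₀ h5).mp hc'
  have hc2 : c^2 < 1/5 := by nlinarith [mul_nonneg hc h5.le]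
  have hs2 : s^2 = 1 - c^2 := Real.sq_sqrt (by nlinarith)
  have hs : 0 < s := Real.sqrt_pos.mpr (by nlinarith)
  clear_value s
  clear hsdef hc'
  have hba0 : 0 ≤ b - a := by linarith
  have hab1' : 0 < 1 - a * b := by linarith
  have hρ' : b - a ≤ c * (1 - a * b) := by
    rwa [div_le_iff₀ hab1'] at hρ
  have h2c : 2 * c < s := lt_of_pow_lt_pow_left₀ 2 hs.le (by nlinarith)
  have hA : 0 < 1 - 2 * ((b - a) / (1 - a*b)) / s := by
    have hρc : (b - a) / (1 - a*b) ≤ c := hρ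
    have : 2 * ((b - a) / (1 - a*b)) / s < 1 := by
      rw [div_lt_one hs]
      have h0 : 0 ≤ (b - a) / (1 - a*b) := div_nonneg hba0 hab1'.le
      linarith
    linarith
  have hx2p : 0 < 1 - x^2 := by rw [hxa]; nlinarith
  have hy2p : 0 < 1 - y^2 := by rw [hyb]; nlinarith
  -- key inequalities
  have k1 : (1 - c^2) * (1 - a*b)^2 ≤ (1 - a^2) * (1 - b^2) := by
    nlinarith [hρ', mul_nonneg hba0 hba0, sq_nonneg (c*(1-a*b) - (b-a)),
      mul_nonneg hc hab1'.le]
  have k2 : s * (1 - a*b) ≤ 1 - a^2 := by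
    have hb2a2 : a^2 ≤ b^2 := by nlinarith
    have hbb : (1-a^2)*(1-b^2) ≤ (1-a^2)^2 := by
      nlinarith [mul_nonneg (show (0:ℝ) ≤ 1 - a^2 by nlinarith)
        (show (0:ℝ) ≤ b^2 - a^2 by linarith)]
    have h1 : (s * (1 - a*b))^2 ≤ (1 - a^2)^2 := by
      rw [mul_pow, hs2]
      linarith [k1, hbb]
    nlinarith [mul_nonneg hs.le hab1'.le]
  have k3 : s * (b^2 - a^2) * (1 - a*b) ≤ 2 * (b - a) * (1 - a^2) := by
    have t1 : 0 ≤ (b - a) * ((1 - a^2) - s * (1 - a*b)) :=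
      mul_nonneg hba0 (by linarith)
    have t2 : 0 ≤ (b - a) * (2 - (a + b)) * (s * (1 - a*b)) :=
      mul_nonneg (mul_nonneg hba0 (by linarith)) (mul_nonneg hs.le hab1'.le)
    nlinarith [t1, t2]
  -- main inequality
  have main : (1 - 2 * ((b - a) / (1 - a*b)) / s) * (1 - x^2) ≤ 1 - y^2 := by
    rw [hxa, hyb]
    have hq : 2 * ((b - a) / (1 - a*b)) / s * (1 - a^2)
        = 2 * (b - a) * (1 - a^2) / ((1 - a*b) * s) := by
      field_simp
    have hgoal : b^2 - a^2 ≤ 2 * (b - a) * (1 - a^2) / ((1 - a*b) * s) := by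
      rw [le_div_iff₀ (mul_pos hab1' hs)]
      nlinarith [k3]
    nlinarith [hq, hgoal]
  have hD : 0 < (1 - 2 * ((b - a) / (1 - a*b)) / s) * (1 - x^2) := mul_pos hA hx2p
  calc 1 / (1 - y^2) ≤ 1 / ((1 - 2 * ((b - a) / (1 - a*b)) / s) * (1 - x^2)) :=
        one_div_le_one_div_of_le hD main
    _ = (1 - 2 * ((b - a) / (1 - a*b)) / s)⁻¹ * (1 / (1 - x^2)) := by
        rw [one_div, mul_inv, one_div]
end

section
/- Let c ∈ [0, 1/√5) and let x, y ∈ (-1,1) have the same sign with ϱ(x,y) ≤ c, where ϱ(x,y) = |x-y|/|1-xy|. Then for all z₁, z₂ lying between x and y (inclusive), ϱ(z₁,z₂) ≤ ϱ(x,y)·(1 + C·ϱ(x,y)) for a constant C depending only on c. -/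
private lemma key (c x y z₁ z₂ : ℝ) (hc0 : 0 ≤ c) (hc1 : c < 1)
    (hx : 0 ≤ x) (hxy : x ≤ y) (hy : y < 1)
    (hρ : y - x ≤ c * (1 - x*y))
    (h1 : x ≤ z₁) (h2 : z₁ ≤ y) (h3 : x ≤ z₂) (h4 : z₂ ≤ y) :
    |z₁ - z₂| / |1 - z₁*z₂| ≤
      ((y-x)/(1-x*y)) * (1 + (1/(1-c)) * ((y-x)/(1-x*y))) := by
  have hy0 : 0 ≤ y := le_trans hx hxy
  have hA : 0 < 1 - x*y := by nlinarith
  have hzz : z₁ * z₂ ≤ y * y :=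
    mul_le_mul h2 h4 (le_trans hx h3) hy0
  have hB : 0 < 1 - z₁*z₂ := by nlinarith
  have hE : 0 < 1 - c := by linarith
  have hzd : |z₁ - z₂| ≤ y - x := by
    rw [abs_sub_le_iff]; constructor <;> linarith
  have hEA : (1-c)*(1-x*y) ≤ 1 - y*y := by
    nlinarith [mul_nonneg hy0 (by linarith : (0:ℝ) ≤ c*(1-x*y) - (y-x)),
      mul_nonneg (mul_nonneg hc0 (by linarith : (0:ℝ) ≤ 1 - y)) hA.le]
  have hB2 : 1 - y*y ≤ 1 - z₁*z₂ := by linarith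
  rw [abs_of_pos hB]
  have hRHS : ((y-x)/(1-x*y)) * (1 + (1/(1-c)) * ((y-x)/(1-x*y)))
      = (y-x)*((1-c)*(1-x*y)+(y-x)) / ((1-c)*(1-x*y)^2) := by
    have hA' : (1 - x*y) ≠ 0 := hA.ne'
    have hE' : (1 - c) ≠ 0 := hE.ne'
    field_simp
    have hA'' : (1 - y*x) ≠ 0 := by rwa [mul_comm]
    field_simp
  rw [hRHS, div_le_div_iff₀ hB (by positivity)]
  have hD : 0 ≤ y - x := by linarith
  have hEA0 : 0 ≤ (1-c)*(1-x*y) := by positivity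
  have h6 : (1-c)*(1-x*y)*(1-y*y) ≤ (1-c)*(1-x*y)*(1-z₁*z₂) :=
    mul_le_mul_of_nonneg_left hB2 hEA0
  have h7 : y*((1-c)*(1-x*y)) ≤ 1 - z₁*z₂ := by
    calc y*((1-c)*(1-x*y)) ≤ 1*((1-c)*(1-x*y)) :=
          mul_le_mul_of_nonneg_right hy.le hEA0
      _ = (1-c)*(1-x*y) := by ring
      _ ≤ 1 - y*y := hEA
      _ ≤ 1 - z₁*z₂ := hB2
  nlinarith [mul_le_mul_of_nonneg_right hzd (by positivity : (0:ℝ) ≤ (1-c)*(1-x*y)^2),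
    mul_le_mul_of_nonneg_left h6 hD,
    mul_le_mul_of_nonneg_left h7 (mul_nonneg hD hD)]

private lemma key2 (c x y z₁ z₂ : ℝ) (hc0 : 0 ≤ c) (hc1 : c < 1)
    (hx : x ∈ Set.Ioo (-1:ℝ) 1) (hy : y ∈ Set.Ioo (-1:ℝ) 1)
    (hxy : 0 ≤ x * y) (hρ : |x - y| / |1 - x*y| ≤ c)
    (hz₁ : z₁ ∈ Set.uIcc x y) (hz₂ : z₂ ∈ Set.uIcc x y) :
    |z₁ - z₂| / |1 - z₁*z₂| ≤
      (|x - y| / |1 - x*y|) * (1 + (1/(1-c)) * (|x - y| / |1 - x*y|)) := by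
  obtain ⟨hx1, hx2⟩ := hx
  obtain ⟨hy1, hy2⟩ := hy
  have hA : 0 < 1 - x*y := by nlinarith
  rw [abs_of_pos hA] at hρ ⊢
  have hρ' : |x - y| ≤ c * (1 - x*y) := by
    rw [div_le_iff₀ hA] at hρ; linarith
  rcases le_total x y with hxy' | hxy'
  · rw [Set.uIcc_of_le hxy'] at hz₁ hz₂
    have habs : |x - y| = y - x := by rw [abs_sub_comm]; exact abs_of_nonneg (by linarith)
    rw [habs] at hρ' ⊢
    rcases le_or_gt 0 x with hx0 | hx0
    · exact key c x y z₁ z₂ hc0 hc1 hx0 hxy' hy2 hρ' hz₁.1 hz₁.2 hz₂.1 hz₂.2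
    · have hy0 : y ≤ 0 := by nlinarith
      have h := key c (-y) (-x) (-z₁) (-z₂) hc0 hc1 (by linarith) (by linarith)
        (by linarith) (by nlinarith) (by linarith [hz₁.2]) (by linarith [hz₁.1])
        (by linarith [hz₂.2]) (by linarith [hz₂.1])
      have e1 : (-z₁) - (-z₂) = -(z₁ - z₂) := by ring
      have e2 : (1:ℝ) - (-z₁)*(-z₂) = 1 - z₁*z₂ := by ring
      have e3 : (-x) - (-y) = y - x := by ring
      have e4 : (1:ℝ) - (-y)*(-x) = 1 - x*y := by ring
      rw [e1, abs_neg, e2, e3, e4] at h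
      exact h
  · rw [Set.uIcc_of_ge hxy'] at hz₁ hz₂
    have habs : |x - y| = x - y := abs_of_nonneg (by linarith)
    rw [habs] at hρ' ⊢
    rcases le_or_gt 0 y with hy0 | hy0
    · have h := key c y x z₁ z₂ hc0 hc1 hy0 hxy' hx2 (by nlinarith)
        hz₁.1 hz₁.2 hz₂.1 hz₂.2
      have e4 : (1:ℝ) - y*x = 1 - x*y := by ring
      rw [e4] at h
      exact h
    · have hx0 : x ≤ 0 := by nlinarith
      have h := key c (-x) (-y) (-z₁) (-z₂) hc0 hc1 (by linarith) (by linarith)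
        (by linarith) (by nlinarith) (by linarith [hz₁.2]) (by linarith [hz₁.1])
        (by linarith [hz₂.2]) (by linarith [hz₂.1])
      have e1 : (-z₁) - (-z₂) = -(z₁ - z₂) := by ring
      have e2 : (1:ℝ) - (-z₁)*(-z₂) = 1 - z₁*z₂ := by ring
      have e3 : (-y) - (-x) = x - y := by ring
      have e4 : (1:ℝ) - (-x)*(-y) = 1 - x*y := by ring
      rw [e1, abs_neg, e2, e3, e4] at h
      exact h

theorem stmt_2 (c : ℝ) (hc : 0 ≤ c) (hc' : c < 1/Real.sqrt 5) :
    ∃ C > 0, ∀ x y : ℝ, x ∈ Set.Ioo (-1:ℝ) 1 → y ∈ Set.Ioo (-1:ℝ) 1 →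
      0 ≤ x * y → |x - y| / |1 - x*y| ≤ c →
      ∀ z₁ ∈ Set.uIcc x y, ∀ z₂ ∈ Set.uIcc x y,
        |z₁ - z₂| / |1 - z₁*z₂| ≤
          (|x - y| / |1 - x*y|) * (1 + C * (|x - y| / |1 - x*y|)) := by
  have h5 : (1:ℝ) < Real.sqrt 5 := by
    rw [show (1:ℝ) = Real.sqrt 1 by simp]
    exact Real.sqrt_lt_sqrt (by norm_num) (by norm_num)
  have hc1 : c < 1 := lt_trans hc' (by rw [div_lt_one (by positivity)]; exact h5)
  have hE : 0 < 1 - c := by linarith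
  refine ⟨1/(1-c), by positivity, ?_⟩
  intro x y hx hy hxy hρ z₁ hz₁ z₂ hz₂
  exact key2 c x y z₁ z₂ hc hc1 hx hy hxy hρ hz₁ hz₂
end

section
/- For τ ≥ 0 and u ∈ (0,1), define h(u) = (1-u^{2τ+1})(1+u^{τ+3/2}) - (2τ+1)(1-u)(u^{τ+1/2}+u^{2τ+1}). Then h(u) ≥ (2τ+1)·u^τ·(1-u)·(1-√u)·(1-u^{τ+1}) > 0. -/
lemma convexOn_sinh' : ConvexOn ℝ (Set.Ici (0:ℝ)) Real.sinh := by
  apply convexOn_of_deriv2_nonneg (convex_Ici 0) Real.continuous_sinh.continuousOn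
    Real.differentiable_sinh.differentiableOn
  · rw [Real.deriv_sinh]
    exact Real.differentiable_cosh.differentiableOn
  · intro x hx
    rw [interior_Ici, Set.mem_Ioi] at hx
    simp only [Function.iterate_succ, Function.iterate_zero, Function.comp_apply, id_eq,
      Real.deriv_sinh, Real.deriv_cosh]
    exact (Real.sinh_pos_iff.2 hx).le

lemma sinh_mul_le (c t : ℝ) (hc : 1 ≤ c) (ht : 0 ≤ t) :
    c * Real.sinh t ≤ Real.sinh (c * t) := by
  have hc0 : 0 < c := lt_of_lt_of_le one_pos hc
  have hw1 : (0:ℝ) ≤ 1/c := by positivity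
  have hw2 : (0:ℝ) ≤ 1 - 1/c := by
    have : 1/c ≤ 1 := by rw [div_le_one hc0]; exact hc
    linarith
  have h : Real.sinh ((1/c) • (c*t) + (1-1/c) • (0:ℝ)) ≤
      (1/c) * Real.sinh (c*t) + (1-1/c) * Real.sinh 0 :=
    convexOn_sinh'.2 (Set.mem_Ici.2 (mul_nonneg hc0.le ht)) (Set.mem_Ici.2 le_rfl)
      hw1 hw2 (by ring)
  simp only [smul_eq_mul, mul_zero, add_zero, Real.sinh_zero] at h
  rw [one_div, inv_mul_cancel_left₀ hc0.ne'] at h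
  calc c * Real.sinh t ≤ c * (c⁻¹ * Real.sinh (c*t)) :=
        mul_le_mul_of_nonneg_left h hc0.le
    _ = Real.sinh (c*t) := by field_simp

-- Key: 1 - u^(2τ+1) ≥ (2τ+1) * u^τ * (1-u)
lemma key_ineq (τ : ℝ) (hτ : 0 ≤ τ) (u : ℝ) (hu0 : 0 < u) (hu1 : u < 1) :
    (2*τ+1) * u^τ * (1-u) ≤ 1 - u^(2*τ+1) := by
  set t : ℝ := -Real.log u / 2 with htdef
  have hlog : Real.log u < 0 := Real.log_neg hu0 hu1
  have ht : 0 < t := by simp only [htdef]; linarith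
  have hL := sinh_mul_le (2*τ+1) t (by linarith) ht.le
  rw [Real.sinh_eq, Real.sinh_eq] at hL
  set X : ℝ := Real.exp (-((2*τ+1)*t)) with hX
  set T : ℝ := Real.exp t with hT
  set s : ℝ := Real.exp (-t) with hs
  have hXpos : 0 < X := Real.exp_pos _
  have hTs : T * s = 1 := by rw [hT, hs, ← Real.exp_add]; simp
  have hexpat : Real.exp ((2*τ+1)*t) * X = 1 := by rw [hX, ← Real.exp_add]; simp
  -- u = s^2, u^τ = T * X ... need: u^τ = exp(τ * log u) = exp(-2τ t) = exp(t - (2τ+1)t) = T * X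
  have hu_eq : u = s * s := by
    rw [hs, ← Real.exp_add]
    rw [show -t + -t = Real.log u by rw [htdef]; ring]
    exact (Real.exp_log hu0).symm
  have hutau : u^τ = T * X := by
    rw [Real.rpow_def_of_pos hu0, hT, hX, ← Real.exp_add]
    congr 1
    rw [htdef]; ring
  have hua : u^(2*τ+1) = X * X := by
    rw [Real.rpow_def_of_pos hu0, hX, ← Real.exp_add]
    congr 1
    rw [htdef]; ring
  -- from hL : (2τ+1) * ((T - s)/2) ≤ (exp((2τ+1)t) - X)/2
  -- multiply by 2X: (2τ+1) * X * (T - s) ≤ 1 - X^2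
  have h2 : (2*τ+1) * X * (T - s) ≤ 1 - X * X := by
    have := mul_le_mul_of_nonneg_left hL hXpos.le
    nlinarith [hexpat]
  rw [hutau, hua, hu_eq]
  have heq : (2*τ+1)*(T*X)*(1-s*s) = (2*τ+1)*X*(T-s) := by
    linear_combination (-(2*τ+1)*X*s) * hTs
  linarith [h2, heq.le, heq.ge]

theorem stmt_7 (τ : ℝ) (hτ : 0 ≤ τ) (u : ℝ) (hu : u ∈ Set.Ioo (0:ℝ) 1) :
    (2*τ+1) * u^τ * (1-u) * (1 - Real.sqrt u) * (1 - u^(τ+1)) ≤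
      (1 - u^(2*τ+1))*(1 + u^(τ+3/2)) - (2*τ+1)*(1-u)*(u^(τ+1/2) + u^(2*τ+1)) ∧
    0 < (2*τ+1) * u^τ * (1-u) * (1 - Real.sqrt u) * (1 - u^(τ+1)) := by
  obtain ⟨hu0, hu1⟩ := hu
  have hK := key_ineq τ hτ u hu0 hu1
  set p : ℝ := u^τ with hp
  set r : ℝ := Real.sqrt u with hr
  have hppos : 0 < p := Real.rpow_pos_of_pos hu0 τ
  have hrpos : 0 < r := Real.sqrt_pos.2 hu0
  have hr1 : r < 1 := by
    rw [hr, show (1:ℝ) = Real.sqrt 1 by simp]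
    exact Real.sqrt_lt_sqrt hu0.le hu1
  have hr2 : r * r = u := Real.mul_self_sqrt hu0.le
  have e1 : u^(τ+1/2) = p * r := by
    rw [Real.rpow_add hu0, hp, ← Real.sqrt_eq_rpow]
  have e2 : u^(2*τ+1) = p * p * u := by
    rw [show 2*τ+1 = τ + (τ + 1) by ring, Real.rpow_add hu0, Real.rpow_add hu0,
      Real.rpow_one, hp]; ring
  have e3 : u^(τ+1) = p * u := by
    rw [Real.rpow_add hu0, Real.rpow_one, hp]
  have e4 : u^(τ+3/2) = p * u * r := by
    rw [show τ+3/2 = (τ+1) + 1/2 by ring, Real.rpow_add hu0, e3, ← Real.sqrt_eq_rpow]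
  rw [e2] at hK
  rw [e1, e2, e3, e4]
  have hpu1 : p * u < 1 := by
    calc p * u ≤ 1 * u := by
          apply mul_le_mul_of_nonneg_right _ hu0.le
          exact Real.rpow_le_one hu0.le hu1.le hτ
      _ < 1 := by linarith
  constructor
  · have hfac : 0 ≤ (1 + p*u*r) * ((1 - p*p*u) - (2*τ+1)*p*(1-u)) :=
      mul_nonneg (by positivity) (by linarith)
    nlinarith [hfac]
  · have h1 : (0:ℝ) < 2*τ+1 := by linarith
    have h2 : (0:ℝ) < 1 - u := by linarith
    have h3 : (0:ℝ) < 1 - r := by linarith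
    have h4 : (0:ℝ) < 1 - p*u := by linarith
    exact mul_pos (mul_pos (mul_pos (mul_pos h1 hppos) h2) h3) h4
end

section
/- For -1/2 < τ < 0, the function u ↦ u^{-2τ}·h'(u) is strictly increasing on (0,1), where h(u) = (1-u^{2τ+1})(1+u^{τ+3/2}) - (2τ+1)(1-u)(u^{τ+1/2}+u^{2τ+1}). Consequently h is strictly decreasing on (0,1) and h(u) > h(1) = 0 for u ∈ (0,1). -/
open Real Set

noncomputable def auxD (τ u : ℝ) : ℝ :=
  -((2*τ+1)*(2*τ+2))*u^(2*τ) + (2*τ+2)*(τ+3/2)*u^(τ+1/2) - (3*τ+5/2)*u^(3*τ+3/2)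
    - (2*τ+1)*(τ+1/2)*u^(τ-1/2) + (2*τ+1)*(2*τ+2)*u^(2*τ+1)

noncomputable def auxG (τ : ℝ) : ℝ → ℝ := fun u =>
  (2*τ+2)*(τ+3/2)*u^(1/2-τ) - (2*τ+2)*(2*τ+1) - (3*τ+5/2)*u^(τ+3/2)
    - (2*τ+1)*(τ+1/2)*u^(-τ-1/2) + (2*τ+1)*(2*τ+2)*u

lemma aux_hasDeriv (τ : ℝ) (u : ℝ) (hu : 0 < u) :
    HasDerivAt (fun u : ℝ => (1 - u^(2*τ+1))*(1 + u^(τ+3/2)) - (2*τ+1)*(1-u)*(u^(τ+1/2) + u^(2*τ+1)))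
      (auxD τ u) u := by
  have P : ∀ p : ℝ, HasDerivAt (fun u : ℝ => u^p) (p * u^(p-1)) u :=
    fun p => Real.hasDerivAt_rpow_const (Or.inl hu.ne')
  have h1 := ((hasDerivAt_const u (1:ℝ)).sub (P (2*τ+1))).mul
    ((hasDerivAt_const u (1:ℝ)).add (P (τ+3/2)))
  have h2 := (((hasDerivAt_const u ((2:ℝ)*τ+1)).mul
    ((hasDerivAt_const u (1:ℝ)).sub (hasDerivAt_id u))).mul ((P (τ+1/2)).add (P (2*τ+1))))
  have h3 := h1.sub h2
  convert h3 using 1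
  · rfl
  · rfl
  · rfl
  unfold auxD
  rw [show (2*τ+1-1 : ℝ) = 2*τ by ring, show (τ+3/2-1 : ℝ) = τ+1/2 by ring,
      show (τ+1/2-1 : ℝ) = τ-1/2 by ring]
  have ma : u^(2*τ) * u^(τ+3/2) = u^(3*τ+3/2) := by
    rw [← Real.rpow_add hu]; congr 1; ring
  have mb : u^(2*τ+1) * u^(τ+1/2) = u^(3*τ+3/2) := by
    rw [← Real.rpow_add hu]; congr 1; ring
  have mc : u * u^(τ-1/2) = u^(τ+1/2) := by
    nth_rewrite 1 [← Real.rpow_one u]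
    rw [← Real.rpow_add hu]; congr 1; ring
  have md : u * u^(2*τ) = u^(2*τ+1) := by
    nth_rewrite 1 [← Real.rpow_one u]
    rw [← Real.rpow_add hu]; congr 1; ring
  simp only [Pi.add_apply, Pi.sub_apply, Pi.mul_apply, id_eq]
  linear_combination ((2*τ+1)) * ma + ((τ+3/2)) * mb + (-(2*τ+1)*(τ+1/2)) * mc + (-(2*τ+1)^2) * md

lemma auxG_eq (τ u : ℝ) (hu : 0 < u) :
    u^(-(2*τ)) * auxD τ u = auxG τ u := by
  have n0 : u^(-(2*τ)) * u^(2*τ) = 1 := by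
    rw [← Real.rpow_add hu, show (-(2*τ)+2*τ : ℝ) = 0 by ring, Real.rpow_zero]
  have n1 : u^(-(2*τ)) * u^(τ+1/2) = u^(1/2-τ) := by
    rw [← Real.rpow_add hu]; congr 1; ring
  have n2 : u^(-(2*τ)) * u^(3*τ+3/2) = u^(τ+3/2) := by
    rw [← Real.rpow_add hu]; congr 1; ring
  have n3 : u^(-(2*τ)) * u^(τ-1/2) = u^(-τ-1/2) := by
    rw [← Real.rpow_add hu]; congr 1; ring
  have n4 : u^(-(2*τ)) * u^(2*τ+1) = u := by
    rw [← Real.rpow_add hu, show (-(2*τ)+(2*τ+1) : ℝ) = 1 by ring, Real.rpow_one]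
  unfold auxD auxG
  linear_combination (-((2*τ+1)*(2*τ+2))) * n0 + ((2*τ+2)*(τ+3/2)) * n1 + (-(3*τ+5/2)) * n2
    + (-(2*τ+1)*(τ+1/2)) * n3 + ((2*τ+1)*(2*τ+2)) * n4

lemma auxG_hasDeriv (τ u : ℝ) (hu : 0 < u) :
    HasDerivAt (auxG τ)
      ((2*τ+2)*(τ+3/2)*(1/2-τ)*u^(-τ-1/2) - (3*τ+5/2)*(τ+3/2)*u^(τ+1/2)
        + (2*τ+1)*(τ+1/2)^2*u^(-τ-3/2) + (2*τ+1)*(2*τ+2)) u := by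
  have P : ∀ p : ℝ, HasDerivAt (fun u : ℝ => u^p) (p * u^(p-1)) u :=
    fun p => Real.hasDerivAt_rpow_const (Or.inl hu.ne')
  have h1 := (((((P (1/2-τ)).const_mul ((2*τ+2)*(τ+3/2))).sub
    (hasDerivAt_const u ((2*τ+2)*(2*τ+1)))).sub
    ((P (τ+3/2)).const_mul (3*τ+5/2))).sub
    ((P (-τ-1/2)).const_mul ((2*τ+1)*(τ+1/2)))).add
    ((hasDerivAt_id u).const_mul ((2*τ+1)*(2*τ+2)))
  unfold auxG
  simp only [id_eq] at h1
  convert h1 using 1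
  · rfl
  · rfl
  · rfl
  rw [show (1/2-τ-1 : ℝ) = -τ-1/2 by ring, show (τ+3/2-1 : ℝ) = τ+1/2 by ring,
      show (-τ-1/2-1 : ℝ) = -τ-3/2 by ring]
  ring

lemma auxG'_pos (τ u : ℝ) (hτ1 : -1/2 < τ) (hτ2 : τ < 0) (hu : 0 < u) (hu1 : u < 1) :
    0 < (2*τ+2)*(τ+3/2)*(1/2-τ)*u^(-τ-1/2) - (3*τ+5/2)*(τ+3/2)*u^(τ+1/2)
        + (2*τ+1)*(τ+1/2)^2*u^(-τ-3/2) + (2*τ+1)*(2*τ+2) := by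
  have hp : u^(τ+1/2) < u^(-τ-1/2) :=
    Real.rpow_lt_rpow_of_exponent_gt hu hu1 (by linarith)
  have hq : u^(τ+1/2) < u^(-τ-3/2) :=
    Real.rpow_lt_rpow_of_exponent_gt hu hu1 (by linarith)
  have hr : u^(τ+1/2) < 1 := Real.rpow_lt_one hu.le hu1 (by linarith)
  have hA : (0:ℝ) < (2*τ+2)*(τ+3/2)*(1/2-τ) :=
    mul_pos (mul_pos (by linarith) (by linarith)) (by linarith)
  have hB : (0:ℝ) < (2*τ+1)*(τ+1/2)^2 :=
    mul_pos (by linarith) (pow_pos (by linarith) 2)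
  have hC : (0:ℝ) < (2*τ+1)*(2*τ+2) := mul_pos (by linarith) (by linarith)
  nlinarith [mul_pos hA (sub_pos.2 hp), mul_pos hB (sub_pos.2 hq), mul_pos hC (sub_pos.2 hr)]

theorem stmt_8 (τ : ℝ) (hτ1 : -1/2 < τ) (hτ2 : τ < 0)
    (h : ℝ → ℝ)
    (hdef : ∀ u : ℝ, h u =
      (1 - u^(2*τ+1))*(1 + u^(τ+3/2)) - (2*τ+1)*(1-u)*(u^(τ+1/2) + u^(2*τ+1))) :
    StrictMonoOn (fun u : ℝ => u^(-(2*τ)) * deriv h u) (Set.Ioo 0 1) ∧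
    StrictAntiOn h (Set.Ioo 0 1) ∧
    h 1 = 0 ∧
    ∀ u ∈ Set.Ioo (0:ℝ) 1, 0 < h u := by
  have hfun : h = fun u : ℝ =>
      (1 - u^(2*τ+1))*(1 + u^(τ+3/2)) - (2*τ+1)*(1-u)*(u^(τ+1/2) + u^(2*τ+1)) := funext hdef
  have hD : ∀ u : ℝ, 0 < u → HasDerivAt h (auxD τ u) u := by
    intro u hu
    rw [hfun]
    exact aux_hasDeriv τ u hu
  have hderiv : ∀ u : ℝ, 0 < u → deriv h u = auxD τ u := fun u hu => (hD u hu).deriv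
  have hGmono : StrictMonoOn (auxG τ) (Ioc 0 1) := by
    apply strictMonoOn_of_deriv_pos (convex_Ioc 0 1)
    · exact fun x hx => ((auxG_hasDeriv τ x hx.1).continuousAt).continuousWithinAt
    · intro x hx
      rw [interior_Ioc] at hx
      rw [(auxG_hasDeriv τ x hx.1).deriv]
      exact auxG'_pos τ x hτ1 hτ2 hx.1 hx.2
  have hEq : EqOn (auxG τ) (fun u : ℝ => u^(-(2*τ)) * deriv h u) (Ioo 0 1) := by
    intro u hu
    simp only
    rw [hderiv u hu.1, auxG_eq τ u hu.1]
  have hG1 : auxG τ 1 = 0 := by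
    unfold auxG
    simp only [Real.one_rpow]
    ring
  have hDneg : ∀ u ∈ Ioo (0:ℝ) 1, deriv h u < 0 := by
    intro u hu
    have h1 : auxG τ u < auxG τ 1 :=
      hGmono ⟨hu.1, hu.2.le⟩ ⟨one_pos, le_refl 1⟩ hu.2
    rw [hG1] at h1
    rw [← auxG_eq τ u hu.1] at h1
    have h3 : (0:ℝ) < u^(-(2*τ)) := Real.rpow_pos_of_pos hu.1 _
    rw [hderiv u hu.1]
    nlinarith
  have hanti : StrictAntiOn h (Ioc 0 1) := by
    apply strictAntiOn_of_deriv_neg (convex_Ioc 0 1)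
    · exact fun u hu => ((hD u hu.1).continuousAt).continuousWithinAt
    · intro x hx
      rw [interior_Ioc] at hx
      exact hDneg x hx
  have h1eq : h 1 = 0 := by
    rw [hdef]
    simp
  refine ⟨(hGmono.mono Ioo_subset_Ioc_self).congr hEq, hanti.mono Ioo_subset_Ioc_self, h1eq,
    fun u hu => ?_⟩
  have := hanti ⟨hu.1, hu.2.le⟩ ⟨one_pos, le_refl 1⟩ hu.2
  rw [h1eq] at this
  exact this
end

section
/- For every τ > -1/2 and every u ∈ (0,1), the quantity Δ_τ(u) := u^{τ+1/2}·[u(1-u^{2τ+1}) - (2τ+1)(1-u)]/[1 - u^{2τ+1} - (2τ+1)u^{2τ+1}(1-u)] satisfies -1 < Δ_τ(u) < 0. -/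
open Real Set

private lemma aux_pos_of_deriv_neg (f f' : ℝ → ℝ)
    (hc : ContinuousOn f (Set.Ioc (0:ℝ) 1))
    (hd : ∀ x ∈ Set.Ioo (0:ℝ) 1, HasDerivAt f (f' x) x)
    (hneg : ∀ x ∈ Set.Ioo (0:ℝ) 1, f' x < 0)
    (h1 : f 1 = 0) {u : ℝ} (hu : u ∈ Set.Ioo (0:ℝ) 1) : 0 < f u := by
  have hsub : Set.Icc u 1 ⊆ Set.Ioc (0:ℝ) 1 := fun x hx => ⟨lt_of_lt_of_le hu.1 hx.1, hx.2⟩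
  have hanti : StrictAntiOn f (Set.Icc u 1) := by
    apply strictAntiOn_of_deriv_neg (convex_Icc u 1) (hc.mono hsub)
    intro x hx
    rw [interior_Icc] at hx
    have hx' : x ∈ Set.Ioo (0:ℝ) 1 := ⟨hu.1.trans hx.1, hx.2⟩
    rw [(hd x hx').deriv]
    exact hneg x hx'
  have h := hanti (Set.left_mem_Icc.2 hu.2.le) (Set.right_mem_Icc.2 hu.2.le) hu.2
  rw [h1] at h
  exact h

private lemma aux_bern {u β : ℝ} (hu0 : 0 ≤ u) (hu1 : u < 1) (hβ : 1 < β) :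
    1 + β * (u - 1) < u ^ β := by
  have h := one_add_mul_self_lt_rpow_one_add (s := u - 1) (by linarith)
    (by intro h; exact absurd (by linarith : u = 1) (ne_of_lt hu1)) hβ
  have e : 1 + (u - 1) = u := by ring
  rwa [e] at h

private lemma auxA (σ : ℝ) (hσ : 0 < σ) {u : ℝ} (hu : u ∈ Set.Ioo (0:ℝ) 1) :
    u * (1 - u ^ σ) - σ * (1 - u) < 0 := by
  have hb := aux_bern hu.1.le hu.2 (show (1:ℝ) < σ + 1 by linarith)
  have he : u ^ (σ + 1) = u ^ σ * u := Real.rpow_add_one hu.1.ne' σ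
  nlinarith [hb, he]

private lemma auxB (σ : ℝ) (hσ : 0 < σ) {u : ℝ} (hu : u ∈ Set.Ioo (0:ℝ) 1) :
    0 < 1 - u ^ σ - σ * u ^ σ * (1 - u) := by
  have hrc : ContinuousOn (fun x : ℝ => x ^ σ) (Set.Ioc (0:ℝ) 1) := fun x hx =>
    (Real.continuousAt_rpow_const x σ (Or.inl (ne_of_gt hx.1))).continuousWithinAt
  refine aux_pos_of_deriv_neg (fun x => 1 - x ^ σ - σ * x ^ σ * (1 - x))
    (fun x => -(σ * (σ + 1) * x ^ (σ - 1) * (1 - x))) ?_ ?_ ?_ ?_ hu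
  · exact (continuousOn_const.sub hrc).sub
      ((continuousOn_const.mul hrc).mul (continuousOn_const.sub continuousOn_id))
  · intro x hx
    have hx0 : (0:ℝ) < x := hx.1
    have hxe : x ^ σ = x ^ (σ - 1) * x := by
      rw [← Real.rpow_add_one hx0.ne']; congr 1; ring
    have hrp : HasDerivAt (fun y : ℝ => y ^ σ) (σ * x ^ (σ - 1)) x :=
      Real.hasDerivAt_rpow_const (Or.inl hx0.ne')
    have h1x : HasDerivAt (fun y : ℝ => 1 - y) (-1 : ℝ) x := by
      simpa using (hasDerivAt_id x).const_sub (1:ℝ)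
    have H := (hrp.const_sub 1).sub ((hrp.const_mul σ).mul h1x)
    have he : -(σ * (σ + 1) * x ^ (σ - 1) * (1 - x))
        = -(σ * x ^ (σ - 1)) - (σ * (σ * x ^ (σ - 1)) * (1 - x) + σ * x ^ σ * (-1)) := by
      rw [hxe]; ring
    show HasDerivAt _ (-(σ * (σ + 1) * x ^ (σ - 1) * (1 - x))) x
    rw [he]
    exact H
  · intro x hx
    show -(σ * (σ + 1) * x ^ (σ - 1) * (1 - x)) < 0
    have hB : (0:ℝ) < x ^ (σ - 1) := Real.rpow_pos_of_pos hx.1 _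
    have h1x : (0:ℝ) < 1 - x := by linarith [hx.2]
    have : 0 < σ * (σ + 1) * x ^ (σ - 1) * (1 - x) :=
      mul_pos (mul_pos (mul_pos hσ (by linarith)) hB) h1x
    linarith
  · simp

private lemma auxC (α : ℝ) (hα : 0 < α) {u : ℝ} (hu : u ∈ Set.Ioo (0:ℝ) 1) :
    0 < 1 - u ^ (2 * α + 1) - (2 * α + 1) * u ^ α * (1 - u) := by
  have hrc1 : ContinuousOn (fun x : ℝ => x ^ (2 * α + 1)) (Set.Ioc (0:ℝ) 1) := fun x hx =>
    (Real.continuousAt_rpow_const x _ (Or.inl (ne_of_gt hx.1))).continuousWithinAt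
  have hrc2 : ContinuousOn (fun x : ℝ => x ^ α) (Set.Ioc (0:ℝ) 1) := fun x hx =>
    (Real.continuousAt_rpow_const x _ (Or.inl (ne_of_gt hx.1))).continuousWithinAt
  refine aux_pos_of_deriv_neg (fun x => 1 - x ^ (2 * α + 1) - (2 * α + 1) * x ^ α * (1 - x))
    (fun x => -((2 * α + 1) * x ^ (α - 1) * (x ^ (α + 1) - (α + 1) * x + α))) ?_ ?_ ?_ ?_ hu
  · exact (continuousOn_const.sub hrc1).sub
      ((continuousOn_const.mul hrc2).mul (continuousOn_const.sub continuousOn_id))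
  · intro x hx
    have hx0 : (0:ℝ) < x := hx.1
    have hr1 : HasDerivAt (fun y : ℝ => y ^ (2 * α + 1)) ((2 * α + 1) * x ^ (2 * α + 1 - 1)) x :=
      Real.hasDerivAt_rpow_const (Or.inl hx0.ne')
    have hr2 : HasDerivAt (fun y : ℝ => y ^ α) (α * x ^ (α - 1)) x :=
      Real.hasDerivAt_rpow_const (Or.inl hx0.ne')
    have h1x : HasDerivAt (fun y : ℝ => 1 - y) (-1 : ℝ) x := by
      simpa using (hasDerivAt_id x).const_sub (1:ℝ)
    have H := (hr1.const_sub 1).sub ((hr2.const_mul (2 * α + 1)).mul h1x)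
    have e1 : x ^ (2 * α + 1 - 1) = x ^ (α - 1) * x ^ (α + 1) := by
      rw [← Real.rpow_add hx0]; congr 1; ring
    have e2 : x ^ α = x ^ (α - 1) * x := by
      rw [← Real.rpow_add_one hx0.ne']; congr 1; ring
    have he : -((2 * α + 1) * x ^ (α - 1) * (x ^ (α + 1) - (α + 1) * x + α))
        = -((2 * α + 1) * x ^ (2 * α + 1 - 1)) -
          ((2 * α + 1) * (α * x ^ (α - 1)) * (1 - x) + (2 * α + 1) * x ^ α * (-1)) := by
      rw [e1, e2]; ring
    show HasDerivAt _ (-((2 * α + 1) * x ^ (α - 1) * (x ^ (α + 1) - (α + 1) * x + α))) x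
    rw [he]
    exact H
  · intro x hx
    show -((2 * α + 1) * x ^ (α - 1) * (x ^ (α + 1) - (α + 1) * x + α)) < 0
    have hB : (0:ℝ) < x ^ (α - 1) := Real.rpow_pos_of_pos hx.1 _
    have hq : 0 < x ^ (α + 1) - (α + 1) * x + α := by
      have hb := aux_bern hx.1.le hx.2 (show (1:ℝ) < α + 1 by linarith)
      nlinarith [hb]
    have : 0 < (2 * α + 1) * x ^ (α - 1) * (x ^ (α + 1) - (α + 1) * x + α) :=
      mul_pos (mul_pos (by linarith) hB) hq
    linarith
  · simp

theorem stmt_9 (τ : ℝ) (hτ : τ > -1/2) (u : ℝ) (hu : u ∈ Set.Ioo (0:ℝ) 1) :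
    -1 < u^(τ+1/2) * (u*(1 - u^(2*τ+1)) - (2*τ+1)*(1-u)) /
        (1 - u^(2*τ+1) - (2*τ+1)*u^(2*τ+1)*(1-u)) ∧
    u^(τ+1/2) * (u*(1 - u^(2*τ+1)) - (2*τ+1)*(1-u)) /
        (1 - u^(2*τ+1) - (2*τ+1)*u^(2*τ+1)*(1-u)) < 0 := by
  obtain ⟨hu0, hu1⟩ := hu
  have hσ : (0:ℝ) < 2*τ+1 := by linarith
  have hα : (0:ℝ) < τ+1/2 := by linarith
  have huIoo : u ∈ Set.Ioo (0:ℝ) 1 := ⟨hu0, hu1⟩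
  have hp : (0:ℝ) < u ^ (τ+1/2) := Real.rpow_pos_of_pos hu0 _
  have hA := auxA (2*τ+1) hσ huIoo
  have hD := auxB (2*τ+1) hσ huIoo
  have hH0 := auxC (τ+1/2) hα huIoo
  have hexp : (2*(τ+1/2)+1 : ℝ) = (2*τ+1) + 1 := by ring
  rw [hexp] at hH0
  -- hH0 : 0 < 1 - u^((2τ+1)+1) - ((2τ+1)+1) * u^(τ+1/2) * (1-u)
  have heσ1 : u ^ ((2*τ+1) + 1) = u ^ (2*τ+1) * u := Real.rpow_add_one hu0.ne' _
  rw [heσ1] at hH0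
  have hpp : u ^ (τ+1/2) * u ^ (τ+1/2) = u ^ (2*τ+1) := by
    rw [← Real.rpow_add hu0]; congr 1; ring
  have hNpos : 0 < u^(τ+1/2) * (u*(1 - u^(2*τ+1)) - (2*τ+1)*(1-u)) +
      (1 - u^(2*τ+1) - (2*τ+1)*u^(2*τ+1)*(1-u)) := by
    have hfac : u^(τ+1/2) * (u*(1 - u^(2*τ+1)) - (2*τ+1)*(1-u)) +
        (1 - u^(2*τ+1) - (2*τ+1)*u^(2*τ+1)*(1-u))
        = (1 + u^(τ+1/2)) * (1 - u^(2*τ+1)*u - ((2*τ+1)+1)*u^(τ+1/2)*(1-u)) := by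
      linear_combination (((2*τ+1)+1)*(1-u)) * hpp
    rw [hfac]
    exact mul_pos (by linarith) (by linarith [hH0])
  constructor
  · rw [lt_div_iff₀ hD]
    nlinarith [hNpos]
  · exact div_neg_of_neg_of_pos (mul_neg_of_pos_of_neg hp hA) hD
end

section
/- ∫₀^∞ (tanh²(v) + tanh(v)·sech(v)·arcsin(sech(v)) − 1) dv = π/2 − 2. -/
open Real MeasureTheory Set Filter Topology

noncomputable def Fkac (v : ℝ) : ℝ :=
  -((Real.cosh v)⁻¹ * Real.arcsin ((Real.cosh v)⁻¹)) - 2 * (Real.sinh v / Real.cosh v)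

lemma cosh_ne (v : ℝ) : Real.cosh v ≠ 0 := (Real.cosh_pos v).ne'

lemma tanh_abs_le (v : ℝ) : |Real.tanh v| ≤ 1 := by
  rw [Real.tanh_eq_sinh_div_cosh, abs_div, abs_of_pos (Real.cosh_pos v),
    div_le_one (Real.cosh_pos v), abs_le]
  constructor <;> · rw [Real.cosh_eq, Real.sinh_eq] <;> nlinarith [Real.exp_pos v, Real.exp_pos (-v)]

lemma sech_le (v : ℝ) (hv : 0 ≤ v) : (Real.cosh v)⁻¹ ≤ 2 * Real.exp (-v) := by
  have h1 : Real.exp v / 2 ≤ Real.cosh v := by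
    rw [Real.cosh_eq]; nlinarith [Real.exp_pos (-v)]
  have h2 : (0:ℝ) < Real.exp v / 2 := by positivity
  calc (Real.cosh v)⁻¹ ≤ (Real.exp v / 2)⁻¹ := by
        exact inv_anti₀ h2 h1
    _ = 2 * Real.exp (-v) := by rw [Real.exp_neg]; field_simp
    
lemma Fkac_deriv (v : ℝ) (hv : 0 < v) :
    HasDerivAt Fkac
      (Real.tanh v ^ 2 + Real.tanh v * (1/Real.cosh v) * Real.arcsin (1/Real.cosh v) - 1) v := by
  have hc : 0 < Real.cosh v := Real.cosh_pos v
  have hc1 : 1 < Real.cosh v := Real.one_lt_cosh.2 hv.ne'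
  have hs : 0 < Real.sinh v := Real.sinh_pos_iff.2 hv
  have hinv1 : (Real.cosh v)⁻¹ < 1 := by
    rw [inv_lt_one_iff₀]; right; exact hc1
  have hinvpos : 0 < (Real.cosh v)⁻¹ := inv_pos.2 hc
  have h2 : HasDerivAt (fun v => (Real.cosh v)⁻¹) (-(Real.sinh v) / (Real.cosh v)^2) v :=
    (Real.hasDerivAt_cosh v).inv hc.ne'
  have h3 : HasDerivAt Real.arcsin (1 / Real.sqrt (1 - ((Real.cosh v)⁻¹)^2)) ((Real.cosh v)⁻¹) :=
    Real.hasDerivAt_arcsin (by linarith) (ne_of_lt hinv1)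
  have h4 := h3.comp v h2
  have h5 := h2.mul h4
  have h6 : HasDerivAt (fun v => Real.sinh v / Real.cosh v)
      ((Real.cosh v * Real.cosh v - Real.sinh v * Real.sinh v) / (Real.cosh v)^2) v :=
    (Real.hasDerivAt_sinh v).div (Real.hasDerivAt_cosh v) hc.ne'
  have hF := (h5.neg).sub (h6.const_mul 2)
  refine hF.congr_deriv ?_
  symm
  have hsq : (1:ℝ) - ((Real.cosh v)⁻¹)^2 = (Real.sinh v / Real.cosh v)^2 := by
    field_simp
    nlinarith [Real.cosh_sq v]
  have hsqrt : Real.sqrt (1 - ((Real.cosh v)⁻¹)^2) = Real.sinh v / Real.cosh v := by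
    rw [hsq]; exact Real.sqrt_sq (by positivity)
  rw [hsqrt, Real.tanh_eq_sinh_div_cosh]
  have hcs : Real.cosh v ^ 2 = Real.sinh v ^ 2 + 1 := Real.cosh_sq v
  field_simp
  simp only [Function.comp_apply]
  linear_combination hcs

lemma cont_integrand : Continuous (fun v : ℝ =>
    Real.tanh v ^ 2 + Real.tanh v * (1/Real.cosh v) * Real.arcsin (1/Real.cosh v) - 1) := by
  have ht : Continuous Real.tanh := by
    have : Real.tanh = fun v => Real.sinh v / Real.cosh v := by
      funext v; exact Real.tanh_eq_sinh_div_cosh v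
    rw [this]
    exact Real.continuous_sinh.div Real.continuous_cosh cosh_ne
  have hsech : Continuous (fun v : ℝ => 1 / Real.cosh v) :=
    continuous_const.div Real.continuous_cosh cosh_ne
  exact (((ht.pow 2).add ((ht.mul hsech).mul (Real.continuous_arcsin.comp hsech)))).sub
    continuous_const

lemma integrable_integrand : IntegrableOn (fun v : ℝ =>
    Real.tanh v ^ 2 + Real.tanh v * (1/Real.cosh v) * Real.arcsin (1/Real.cosh v) - 1)
    (Set.Ioi (0:ℝ)) := by
  have hg : IntegrableOn (fun v : ℝ => (1 + π/2) * 2 * Real.exp (-1 * v)) (Set.Ioi (0:ℝ)) :=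
    (exp_neg_integrableOn_Ioi (0:ℝ) (one_pos)).const_mul ((1 + π/2) * 2)
  refine Integrable.mono hg cont_integrand.aestronglyMeasurable.restrict ?_
  filter_upwards [MeasureTheory.ae_restrict_mem measurableSet_Ioi] with v hv
  have hv0 : (0:ℝ) < v := hv
  have hc : 0 < Real.cosh v := Real.cosh_pos v
  have hc1 : 1 ≤ Real.cosh v := Real.one_le_cosh v
  have hsechle1 : (Real.cosh v)⁻¹ ≤ 1 := inv_le_one_of_one_le₀ hc1
  have hsechpos : 0 < (Real.cosh v)⁻¹ := inv_pos.2 hc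
  have htanh : |Real.tanh v| ≤ 1 := tanh_abs_le v
  have harcsin : |Real.arcsin ((Real.cosh v)⁻¹)| ≤ π/2 := by
    rw [abs_le]
    exact ⟨Real.neg_pi_div_two_le_arcsin _, Real.arcsin_le_pi_div_two _⟩
  have hsq : Real.tanh v ^ 2 - 1 = -((Real.cosh v)⁻¹)^2 := by
    rw [Real.tanh_eq_sinh_div_cosh]
    field_simp
    nlinarith [Real.cosh_sq v]
  have key : |Real.tanh v ^ 2 + Real.tanh v * (1/Real.cosh v) * Real.arcsin (1/Real.cosh v) - 1|
      ≤ (1 + π/2) * (Real.cosh v)⁻¹ := by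
    have h1 : |Real.tanh v ^ 2 - 1| ≤ (Real.cosh v)⁻¹ := by
      rw [hsq, abs_neg, abs_of_nonneg (by positivity)]
      calc ((Real.cosh v)⁻¹)^2 ≤ (Real.cosh v)⁻¹ * 1 := by
            rw [sq]; exact mul_le_mul_of_nonneg_left hsechle1 hsechpos.le
        _ = (Real.cosh v)⁻¹ := mul_one _
    have h2 : |Real.tanh v * (1/Real.cosh v) * Real.arcsin (1/Real.cosh v)|
        ≤ π/2 * (Real.cosh v)⁻¹ := by
      rw [abs_mul, abs_mul, one_div, abs_of_pos hsechpos]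
      calc |Real.tanh v| * (Real.cosh v)⁻¹ * |Real.arcsin (Real.cosh v)⁻¹|
          ≤ 1 * (Real.cosh v)⁻¹ * (π/2) := by
            apply mul_le_mul (mul_le_mul_of_nonneg_right htanh hsechpos.le) harcsin
              (abs_nonneg _) (by positivity)
        _ = π/2 * (Real.cosh v)⁻¹ := by ring
    calc |Real.tanh v ^ 2 + Real.tanh v * (1/Real.cosh v) * Real.arcsin (1/Real.cosh v) - 1|
        = |(Real.tanh v ^ 2 - 1) + Real.tanh v * (1/Real.cosh v) * Real.arcsin (1/Real.cosh v)| :=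
          by ring_nf
      _ ≤ |Real.tanh v ^ 2 - 1| + |Real.tanh v * (1/Real.cosh v) * Real.arcsin (1/Real.cosh v)| :=
          abs_add_le _ _
      _ ≤ (Real.cosh v)⁻¹ + π/2 * (Real.cosh v)⁻¹ := add_le_add h1 h2
      _ = (1 + π/2) * (Real.cosh v)⁻¹ := by ring
  have hexp := sech_le v hv0.le
  calc ‖Real.tanh v ^ 2 + Real.tanh v * (1/Real.cosh v) * Real.arcsin (1/Real.cosh v) - 1‖
      ≤ (1 + π/2) * (Real.cosh v)⁻¹ := key
    _ ≤ (1 + π/2) * (2 * Real.exp (-v)) := by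
        apply mul_le_mul_of_nonneg_left hexp (by positivity)
    _ = (1 + π/2) * 2 * Real.exp (-1 * v) := by rw [neg_one_mul]; ring
    _ ≤ ‖(1 + π/2) * 2 * Real.exp (-1 * v)‖ := le_abs_self _

lemma cosh_tendsto : Tendsto Real.cosh atTop atTop := by
  apply tendsto_atTop_mono (fun x => ?_) (Real.tendsto_exp_atTop.atTop_div_const two_pos)
  rw [Real.cosh_eq]
  have := Real.exp_pos (-x)
  linarith

lemma sech_tendsto : Tendsto (fun v => (Real.cosh v)⁻¹) atTop (𝓝 0) :=
  tendsto_inv_atTop_zero.comp cosh_tendsto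

lemma tanh_tendsto : Tendsto (fun v => Real.sinh v / Real.cosh v) atTop (𝓝 1) := by
  have heq : ∀ v : ℝ, Real.sinh v / Real.cosh v = 1 - 2 / (Real.exp (2*v) + 1) := by
    intro v
    have h1 : Real.exp (2*v) = Real.exp v * Real.exp v := by
      rw [two_mul, Real.exp_add]
    rw [Real.sinh_eq, Real.cosh_eq, h1, Real.exp_neg]
    have he := Real.exp_pos v
    field_simp
    ring
  simp only [heq]
  have h2 : Tendsto (fun v : ℝ => Real.exp (2*v) + 1) atTop atTop := by
    apply Filter.tendsto_atTop_add_const_right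
    exact Real.tendsto_exp_atTop.comp (tendsto_id.const_mul_atTop two_pos)
  have h3 : Tendsto (fun v : ℝ => 2 / (Real.exp (2*v) + 1)) atTop (𝓝 0) := by
    simpa [div_eq_mul_inv] using (tendsto_inv_atTop_zero.comp h2).const_mul 2
  simpa using (tendsto_const_nhds.sub h3)

lemma Fkac_tendsto : Tendsto Fkac atTop (𝓝 (-2)) := by
  have h1 : Tendsto (fun v => Real.arcsin ((Real.cosh v)⁻¹)) atTop (𝓝 0) := by
    have := (Real.continuous_arcsin.tendsto 0).comp sech_tendsto
    simpa [Function.comp_def] using this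
  have := ((sech_tendsto.mul h1).neg).sub (tanh_tendsto.const_mul 2)
  rw [show (-2:ℝ) = -(0*0) - 2*1 by norm_num]
  exact this

lemma Fkac_cont : Continuous Fkac := by
  unfold Fkac
  have hsech : Continuous (fun v : ℝ => (Real.cosh v)⁻¹) :=
    Real.continuous_cosh.inv₀ cosh_ne
  exact ((hsech.mul (Real.continuous_arcsin.comp hsech)).neg).sub
    (continuous_const.mul (Real.continuous_sinh.div Real.continuous_cosh cosh_ne))

theorem stmt_12 :
    ∫ v in Set.Ioi (0:ℝ),
      (Real.tanh v ^ 2 + Real.tanh v * (1/Real.cosh v) * Real.arcsin (1/Real.cosh v) - 1)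
      = Real.pi/2 - 2 := by
  have := MeasureTheory.integral_Ioi_of_hasDerivAt_of_tendsto
    (Fkac_cont.continuousWithinAt)
    (fun x hx => Fkac_deriv x hx)
    integrable_integrand
    Fkac_tendsto
  rw [this]
  have : Fkac 0 = -(π/2) := by
    unfold Fkac
    simp [Real.arcsin_one]
  rw [this]
  ring
end

section
/- For τ > -1/2, the function f_τ is bounded on [0,1]: sup_{u∈[0,1]} |f_τ(u)| < ∞. -/
open Real Set

private lemma nonneg_of_deriv (G G' : ℝ → ℝ) (hG1 : G 1 = 0)
    (hd : ∀ x : ℝ, 0 < x → HasDerivAt G (G' x) x)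
    (hneg : ∀ x : ℝ, 0 < x → x < 1 → G' x ≤ 0)
    {u : ℝ} (hu0 : 0 < u) (hu1 : u ≤ 1) : 0 ≤ G u := by
  rcases eq_or_lt_of_le hu1 with h | h
  · rw [h, hG1]
  have hanti : AntitoneOn G (Icc u 1) := by
    apply antitoneOn_of_deriv_nonpos (convex_Icc u 1)
    · intro x hx
      exact ((hd x (lt_of_lt_of_le hu0 hx.1)).differentiableAt).continuousAt.continuousWithinAt
    · intro x hx
      rw [interior_Icc] at hx
      exact ((hd x (lt_trans hu0 hx.1)).differentiableAt).differentiableWithinAt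
    · intro x hx
      rw [interior_Icc] at hx
      rw [(hd x (lt_trans hu0 hx.1)).deriv]
      exact hneg x (lt_trans hu0 hx.1) hx.2
  have h2 := hanti (left_mem_Icc.2 hu1) (right_mem_Icc.2 hu1) hu1
  rw [hG1] at h2
  exact h2

private lemma rpow_split {x c : ℝ} (hx : x ≠ 0) : x ^ c = x ^ (c-1) * x := by
  nth_rewrite 1 [show c = (c-1)+1 by ring]
  exact Real.rpow_add_one hx _

private lemma lemD_nonneg (c : ℝ) (hc : 0 < c) {u : ℝ} (hu0 : 0 < u) (hu1 : u ≤ 1) :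
    0 ≤ 1 - u^c - c*u^c*(1-u) := by
  apply nonneg_of_deriv (fun x : ℝ => 1 - x^c - c*x^c*(1-x))
    (fun x : ℝ => (0 - c*x^(c-1)) - ((c*(c*x^(c-1)))*(1-x) + (c*x^c)*(0-1)))
  · simp [Real.one_rpow]
  · intro x hx
    have hp : HasDerivAt (fun y : ℝ => y ^ c) (c * x^(c-1)) x :=
      Real.hasDerivAt_rpow_const (Or.inl hx.ne')
    exact ((hasDerivAt_const x (1:ℝ)).sub hp).sub
      ((hp.const_mul c).mul ((hasDerivAt_const x (1:ℝ)).sub (hasDerivAt_id x)))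
  · intro x hx0 hx1
    rw [show x^c = x^(c-1)*x from rpow_split hx0.ne']
    have hp : (0:ℝ) < x^(c-1) := Real.rpow_pos_of_pos hx0 _
    nlinarith [mul_pos (mul_pos hc hp) (sub_pos.2 hx1), mul_pos hc hp]
  · exact hu0
  · exact hu1

private lemma lemD_le (c : ℝ) (hc : 0 < c) {u : ℝ} (hu0 : 0 < u) (hu1 : u ≤ 1) :
    1 - u^c - c*u^c*(1-u) ≤ (c+1)*(1-u)*(1-u^c) := by
  have h := nonneg_of_deriv
    (fun x : ℝ => (c+1)*(1-x)*(1-x^c) - (1 - x^c - c*x^c*(1-x)))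
    (fun x : ℝ => ((c+1)*(0-1)*(1-x^c) + (c+1)*(1-x)*(0 - c*x^(c-1)))
      - ((0 - c*x^(c-1)) - ((c*(c*x^(c-1)))*(1-x) + (c*x^c)*(0-1))))
    (by simp [Real.one_rpow])
    (fun x hx => by
      have hp : HasDerivAt (fun y : ℝ => y ^ c) (c * x^(c-1)) x :=
        Real.hasDerivAt_rpow_const (Or.inl hx.ne')
      have h1 : HasDerivAt (fun y : ℝ => (c+1)*(1-y)) ((c+1)*(0-1)) x :=
        ((hasDerivAt_const x (1:ℝ)).sub (hasDerivAt_id x)).const_mul (c+1)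
    -- careful with derivative shape
      exact (h1.mul ((hasDerivAt_const x (1:ℝ)).sub hp)).sub
        (((hasDerivAt_const x (1:ℝ)).sub hp).sub
          ((hp.const_mul c).mul ((hasDerivAt_const x (1:ℝ)).sub (hasDerivAt_id x))))
      )
    (fun x hx0 hx1 => by
      beta_reduce
      rw [show x^c = x^(c-1)*x from rpow_split hx0.ne']
      have hp : (0:ℝ) < x^(c-1) := Real.rpow_pos_of_pos hx0 _
      have hxc : x^(c-1)*x ≤ 1 := by
        rw [← rpow_split hx0.ne']
        exact Real.rpow_le_one hx0.le hx1.le hc.le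
      nlinarith [mul_pos hc hp])
    hu0 hu1
  beta_reduce at h
  linarith

private lemma lem_psi_nonpos (c : ℝ) (hc : 0 < c) {u : ℝ} (hu0 : 0 < u) (hu1 : u ≤ 1) :
    u*(1-u^c) - c*(1-u) ≤ 0 := by
  have h := nonneg_of_deriv
    (fun x : ℝ => -(x*(1-x^c) - c*(1-x)))
    (fun x : ℝ => -((1*(1-x^c) + x*(0 - c*x^(c-1))) - c*(0-1)))
    (by simp [Real.one_rpow])
    (fun x hx => by
      have hp : HasDerivAt (fun y : ℝ => y ^ c) (c * x^(c-1)) x :=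
        Real.hasDerivAt_rpow_const (Or.inl hx.ne')
      exact (((hasDerivAt_id x).mul ((hasDerivAt_const x (1:ℝ)).sub hp)).sub
        (((hasDerivAt_const x (1:ℝ)).sub (hasDerivAt_id x)).const_mul c)).neg)
    (fun x hx0 hx1 => by
      beta_reduce
      rw [show x^c = x^(c-1)*x from rpow_split hx0.ne']
      have hp : (0:ℝ) < x^(c-1) := Real.rpow_pos_of_pos hx0 _
      have hxc : x^(c-1)*x ≤ 1 := by
        rw [← rpow_split hx0.ne']
        exact Real.rpow_le_one hx0.le hx1.le hc.le
      nlinarith [mul_pos hc hp])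
    hu0 hu1
  beta_reduce at h
  linarith

private lemma lem_psi_ge (c : ℝ) (hc : 0 < c) {u : ℝ} (hu0 : 0 < u) (hu1 : u ≤ 1) :
    -(u*(1-u^c) - c*(1-u)) ≤ (c+1)*(1-u)*(1-u^c) := by
  have h := nonneg_of_deriv
    (fun x : ℝ => (c+1)*(1-x)*(1-x^c) + (x*(1-x^c) - c*(1-x)))
    (fun x : ℝ => ((c+1)*(0-1)*(1-x^c) + (c+1)*(1-x)*(0 - c*x^(c-1)))
      + ((1*(1-x^c) + x*(0 - c*x^(c-1))) - c*(0-1)))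
    (by simp [Real.one_rpow])
    (fun x hx => by
      have hp : HasDerivAt (fun y : ℝ => y ^ c) (c * x^(c-1)) x :=
        Real.hasDerivAt_rpow_const (Or.inl hx.ne')
      have h1 : HasDerivAt (fun y : ℝ => (c+1)*(1-y)) ((c+1)*(0-1)) x :=
        ((hasDerivAt_const x (1:ℝ)).sub (hasDerivAt_id x)).const_mul (c+1)
      exact (h1.mul ((hasDerivAt_const x (1:ℝ)).sub hp)).add
        (((hasDerivAt_id x).mul ((hasDerivAt_const x (1:ℝ)).sub hp)).sub
          (((hasDerivAt_const x (1:ℝ)).sub (hasDerivAt_id x)).const_mul c)))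
    (fun x hx0 hx1 => by
      beta_reduce
      rw [show x^c = x^(c-1)*x from rpow_split hx0.ne']
      have hp : (0:ℝ) < x^(c-1) := Real.rpow_pos_of_pos hx0 _
      nlinarith [mul_pos (mul_pos hc hp) (sub_pos.2 hx1), mul_pos hc hp])
    hu0 hu1
  beta_reduce at h
  linarith

private lemma lemB_lower (c : ℝ) (hc : 0 < c) {u : ℝ} (hu0 : 0 < u) (hu1 : u < 1) :
    min 1 c * (1-u) ≤ 1 - u^c := by
  rcases le_total c 1 with h | h
  · rw [min_eq_right h]
    have := Real.geom_mean_le_arith_mean2_weighted hc.le (by linarith : (0:ℝ) ≤ 1 - c)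
      hu0.le zero_le_one (by ring)
    rw [Real.one_rpow, mul_one] at this
    nlinarith
  · rw [min_eq_left h]
    have : u ^ c ≤ u ^ (1:ℝ) := Real.rpow_le_rpow_of_exponent_ge hu0 hu1.le h
    rw [Real.rpow_one] at this
    linarith
set_option maxHeartbeats 1000000 in
theorem stmt_14 (τ : ℝ) (hτ : τ > -1/2)
    (Δ Sg f : ℝ → ℝ)
    (hΔ : ∀ u ∈ Set.Ioo (0:ℝ) 1, Δ u =
      u^(τ+1/2) * (u*(1 - u^(2*τ+1)) - (2*τ+1)*(1-u)) /
        (1 - u^(2*τ+1) - (2*τ+1)*u^(2*τ+1)*(1-u)))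
    (hSg : ∀ u ∈ Set.Ioo (0:ℝ) 1, Sg u =
      (1 - u^(2*τ+1) - (2*τ+1)*(1-u)*u^(2*τ+1)) / (1 - u^(2*τ+1))^((3:ℝ)/2))
    (hf : ∀ u ∈ Set.Ioo (0:ℝ) 1, f u =
      (Real.sqrt (1 - (Δ u)^2) + Δ u * Real.arcsin (Δ u)) * Sg u - 1)
    (hf0 : f 0 = 0) (hf1 : f 1 = -1) :
    ∃ M : ℝ, ∀ u ∈ Set.Icc (0:ℝ) 1, |f u| ≤ M := by
  obtain ⟨c, hcdef⟩ : ∃ c : ℝ, c = 2*τ+1 := ⟨_, rfl⟩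
  simp only [← hcdef] at hΔ hSg
  have hc : 0 < c := by rw [hcdef]; linarith
  have hm : 0 < min 1 c := lt_min one_pos hc
  have hmr : 0 < Real.sqrt (min 1 c) := Real.sqrt_pos.2 hm
  obtain ⟨m, hmdef⟩ : ∃ m : ℝ, m = Real.sqrt (min 1 c) := ⟨_, rfl⟩
  rw [← hmdef] at hmr
  obtain ⟨C, hCdef⟩ : ∃ C : ℝ, C = (c+1)/m := ⟨_, rfl⟩
  have hC0 : 0 ≤ C := by rw [hCdef]; exact div_nonneg (by linarith) hmr.le
  have hmC : m * C = c + 1 := by rw [hCdef]; field_simp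
  have hπ : 0 < π/2 := by positivity
  refine ⟨C + (π/2)*C + 1, ?_⟩
  intro u hu
  rcases eq_or_lt_of_le hu.1 with h0 | h0
  · rw [← h0, hf0, abs_zero]; nlinarith
  rcases eq_or_lt_of_le hu.2 with h1 | h1
  · rw [h1, hf1, abs_of_nonpos (by norm_num)]; nlinarith
  have huo : u ∈ Set.Ioo (0:ℝ) 1 := ⟨h0, h1⟩
  have hu0 : 0 < u := h0
  have hu1 : u < 1 := h1
  have hB : 0 < 1 - u^c := by
    have := Real.rpow_lt_one hu0.le hu1 hc
    linarith
  have hs : 0 < Real.sqrt (1 - u^c) := Real.sqrt_pos.2 hB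
  have hB32 : (1 - u^c) ^ ((3:ℝ)/2) = (1 - u^c) * Real.sqrt (1 - u^c) := by
    rw [show (3:ℝ)/2 = 1 + 1/2 by norm_num, Real.rpow_add hB, Real.rpow_one,
      Real.sqrt_eq_rpow]
  have hD0 : 0 ≤ 1 - u^c - c*u^c*(1-u) := lemD_nonneg c hc hu0 hu1.le
  have hDle : 1 - u^c - c*u^c*(1-u) ≤ (c+1)*(1-u)*(1-u^c) := lemD_le c hc hu0 hu1.le
  have hψn : u*(1-u^c) - c*(1-u) ≤ 0 := lem_psi_nonpos c hc hu0 hu1.le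
  have hψg : -(u*(1-u^c) - c*(1-u)) ≤ (c+1)*(1-u)*(1-u^c) := lem_psi_ge c hc hu0 hu1.le
  have hBl : min 1 c * (1-u) ≤ 1 - u^c := lemB_lower c hc hu0 hu1
  have hR0 : 0 ≤ (c+1)*(1-u)*(1-u^c) :=
    mul_nonneg (mul_nonneg (by linarith) (by linarith)) hB.le
  -- key: (c+1)*(1-u) ≤ C * √(1-u^c)
  have hsge : m * (1-u) ≤ Real.sqrt (1 - u^c) := by
    have h1' : Real.sqrt (min 1 c * (1-u)) ≤ Real.sqrt (1 - u^c) := Real.sqrt_le_sqrt hBl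
    rw [Real.sqrt_mul hm.le, ← hmdef] at h1'
    have h2' : 1-u ≤ Real.sqrt (1-u) := by
      nlinarith [Real.sq_sqrt (by linarith : (0:ℝ) ≤ 1-u), Real.sqrt_nonneg (1-u),
        Real.sqrt_le_sqrt (by linarith : (1:ℝ)-u ≤ 1), Real.sqrt_one]
    calc m * (1-u) ≤ m * Real.sqrt (1-u) := by nlinarith
      _ ≤ Real.sqrt (1 - u^c) := h1'
  have hkey : (c+1)*(1-u) ≤ C * Real.sqrt (1 - u^c) := by
    have h3' := mul_le_mul_of_nonneg_left hsge hC0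
    have h4' : (c+1)*(1-u) = C * (m * (1-u)) := by rw [← hmC]; ring
    linarith
  have hkeyB : (c+1)*(1-u)*(1-u^c) ≤ C * ((1-u^c) * Real.sqrt (1 - u^c)) := by
    have := mul_le_mul_of_nonneg_right hkey hB.le
    nlinarith []
  -- Sg bounds
  have hSgu : Sg u = (1 - u^c - c*u^c*(1-u)) / ((1 - u^c) * Real.sqrt (1 - u^c)) := by
    rw [hSg u huo, hB32]; ring_nf
  have hSg0 : 0 ≤ Sg u := by
    rw [hSgu]; exact div_nonneg hD0 (by positivity)
  have hSgC : Sg u ≤ C := by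
    rw [hSgu, div_le_iff₀ (by positivity)]
    linarith
  -- Δ * Sg bound
  have hΔu : Δ u = u^(c/2) * (u*(1 - u^c) - c*(1-u)) / (1 - u^c - c*u^c*(1-u)) := by
    rw [hΔ u huo, show τ + 1/2 = c/2 by rw [hcdef]; ring]
  have hA : |u^(c/2) * (u*(1 - u^c) - c*(1-u))| ≤ (c+1)*(1-u)*(1-u^c) := by
    rw [abs_mul, abs_of_nonneg (Real.rpow_nonneg hu0.le _)]
    have hx1 : u^(c/2) ≤ 1 := Real.rpow_le_one hu0.le hu1.le (by positivity)
    have hψabs : |u*(1 - u^c) - c*(1-u)| ≤ (c+1)*(1-u)*(1-u^c) :=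
      abs_le.2 ⟨by linarith, by linarith⟩
    calc u^(c/2) * |u*(1 - u^c) - c*(1-u)| ≤ 1 * ((c+1)*(1-u)*(1-u^c)) :=
          mul_le_mul hx1 hψabs (abs_nonneg _) one_pos.le
      _ = (c+1)*(1-u)*(1-u^c) := one_mul _
  have hΔSg : |Δ u * Sg u| ≤ C := by
    by_cases hD : 1 - u^c - c*u^c*(1-u) = 0
    · rw [hΔu, hD, div_zero, zero_mul, abs_zero]; exact hC0
    · have hrw : Δ u * Sg u =
          (u^(c/2) * (u*(1 - u^c) - c*(1-u))) / ((1 - u^c) * Real.sqrt (1 - u^c)) := by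
        rw [hΔu, hSgu]
        field_simp
      rw [hrw, abs_div, abs_of_pos (by positivity : (0:ℝ) < (1 - u^c) * Real.sqrt (1 - u^c)),
        div_le_iff₀ (by positivity)]
      exact hA.trans hkeyB
  -- final
  have hfe : f u = Real.sqrt (1 - (Δ u)^2) * Sg u + (Δ u * Sg u) * Real.arcsin (Δ u) - 1 := by
    rw [hf u huo]; ring
  have hsq1 : Real.sqrt (1 - (Δ u)^2) ≤ 1 := by
    have h' : Real.sqrt (1 - (Δ u)^2) ≤ Real.sqrt 1 :=
      Real.sqrt_le_sqrt (by nlinarith [sq_nonneg (Δ u)])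
    rwa [Real.sqrt_one] at h'
  have hsq0 : 0 ≤ Real.sqrt (1 - (Δ u)^2) := Real.sqrt_nonneg _
  have harc : |Real.arcsin (Δ u)| ≤ π/2 := by
    have h5' := Real.arcsin_mem_Icc (Δ u)
    exact abs_le.2 ⟨by linarith [h5'.1], h5'.2⟩
  have e1 : 0 ≤ Real.sqrt (1 - (Δ u)^2) * Sg u := mul_nonneg hsq0 hSg0
  have e1' : Real.sqrt (1 - (Δ u)^2) * Sg u ≤ C := by
    calc Real.sqrt (1 - (Δ u)^2) * Sg u ≤ 1 * C := mul_le_mul hsq1 hSgC hSg0 one_pos.le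
      _ = C := one_mul _
  have e2 : |(Δ u * Sg u) * Real.arcsin (Δ u)| ≤ C * (π/2) := by
    rw [abs_mul]
    exact mul_le_mul hΔSg harc (abs_nonneg _) hC0
  have e2' := abs_le.1 e2
  rw [hfe, abs_le]
  constructor
  · linarith [e2'.1]
  · linarith [e2'.2]
end

section
/- For τ > -1/2 there exist constants C > 0 and u₀ ∈ (0,1) such that |f_τ(u)| ≤ C·u^{2τ+1} for all u ∈ (0, u₀), and |f_τ(u) + 1| ≤ C·√(1-u) for all u ∈ (1−u₀, 1). -/
open Real

lemma aux_arcsin_key {y : ℝ} (hy0 : 0 ≤ y) (hy1 : y ≤ 1) : Real.arcsin y ≤ π/2 * y := by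
  have hπ := Real.pi_pos
  have ht : π/2 * y ≤ π/2 := by nlinarith
  have ht0 : 0 ≤ π/2 * y := by positivity
  have hs : y ≤ Real.sin (π/2 * y) := by
    have h := Real.mul_le_sin (x := π/2 * y) ht0 ht
    have : (2/π) * (π/2 * y) = y := by field_simp
    linarith [this ▸ h]
  calc Real.arcsin y ≤ Real.arcsin (Real.sin (π/2 * y)) := Real.monotone_arcsin hs
    _ = π/2 * y := Real.arcsin_sin (by linarith) ht

lemma aux_arcsin_le {x : ℝ} (hx : |x| ≤ 1) : |Real.arcsin x| ≤ π/2 * |x| := by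
  rcases le_or_gt 0 x with h | h
  · rw [abs_of_nonneg h, abs_of_nonneg (Real.arcsin_nonneg.2 h)]
    exact aux_arcsin_key h (by rwa [abs_of_nonneg h] at hx)
  · rw [abs_of_neg h, abs_of_neg (by simpa using Real.arcsin_lt_zero.2 h)]
    have := aux_arcsin_key (y := -x) (by linarith) (by rwa [abs_of_neg h] at hx)
    rwa [Real.arcsin_neg] at this

set_option maxHeartbeats 1600000 in
lemma aux_near0 {u τ : ℝ} (hτ : τ > -1/2) (hu0 : 0 < u) (hu1 : u < 1)
    (ha' : u^(2*τ+1) ≤ 1/(8*(1+(2*τ+1))^2)) :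
    |(Real.sqrt (1 - (u^(τ+1/2) * (u*(1 - u^(2*τ+1)) - (2*τ+1)*(1-u)) /
        (1 - u^(2*τ+1) - (2*τ+1)*u^(2*τ+1)*(1-u)))^2)
      + (u^(τ+1/2) * (u*(1 - u^(2*τ+1)) - (2*τ+1)*(1-u)) /
        (1 - u^(2*τ+1) - (2*τ+1)*u^(2*τ+1)*(1-u)))
        * Real.arcsin (u^(τ+1/2) * (u*(1 - u^(2*τ+1)) - (2*τ+1)*(1-u)) /
        (1 - u^(2*τ+1) - (2*τ+1)*u^(2*τ+1)*(1-u))))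
      * ((1 - u^(2*τ+1) - (2*τ+1)*(1-u)*u^(2*τ+1)) / (1 - u^(2*τ+1))^((3:ℝ)/2)) - 1|
      ≤ (24*(1+(2*τ+1))^2 + 2*(1+(2*τ+1))) * u^(2*τ+1) := by
  have hnum : 1 - u^(2*τ+1) - (2*τ+1)*(1-u)*u^(2*τ+1)
      = 1 - u^(2*τ+1) - (2*τ+1)*u^(2*τ+1)*(1-u) := by ring
  rw [hnum]
  set p : ℝ := 2*τ+1 with hp_def
  have hp : 0 < p := by simp only [hp_def]; linarith
  set a : ℝ := u^(2*τ+1) with ha_def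
  set s : ℝ := u^(τ+1/2) with hs_def
  have ha_pos : 0 < a := Real.rpow_pos_of_pos hu0 _
  have ha_lt1 : a < 1 := Real.rpow_lt_one hu0.le hu1 (by linarith)
  have hs_pos : 0 < s := Real.rpow_pos_of_pos hu0 _
  have hs_le1 : s ≤ 1 := Real.rpow_le_one hu0.le hu1.le (by linarith)
  have hs2 : s^2 = a := by
    rw [sq, hs_def, ha_def, ← Real.rpow_add hu0]; norm_num; ring_nf
  have ha_small : 8*(1+p)^2*a ≤ 1 := by
    have := (le_div_iff₀ (by positivity : (0:ℝ) < 8*(1+p)^2)).1 ha'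
    linarith
  set A : ℝ := 1 - a with hA_def
  have hA_pos : 0 < A := by rw [hA_def]; linarith
  have hA_le1 : A ≤ 1 := by rw [hA_def]; linarith
  set B : ℝ := A^((3:ℝ)/2) with hB_def
  have hB_eq : B = A * Real.sqrt A := by
    rw [hB_def, show (3:ℝ)/2 = 1 + 1/2 by norm_num, Real.rpow_add hA_pos,
      Real.rpow_one, ← Real.sqrt_eq_rpow]
  clear_value p a s B A
  clear ha' hp_def ha_def hs_def hB_def
  set N : ℝ := u * A - p * (1 - u) with hN_def
  set D : ℝ := A - p * a * (1 - u) with hD_def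
  set Δ : ℝ := s * N / D with hΔ_def
  set Sv : ℝ := D / B with hSv_def
  clear_value N D Δ Sv
  -- basic facts
  have h1pa : (1+p)*a ≤ 1/8 := by
    nlinarith [mul_nonneg hp.le ha_pos.le, mul_nonneg (mul_nonneg hp.le hp.le) ha_pos.le]
  have ha8 : a ≤ 1/8 := by nlinarith [mul_nonneg hp.le ha_pos.le]
  have hpa1u : 0 ≤ p*a*(1-u) := by
    have h1u : (0:ℝ) ≤ 1 - u := by linarith
    positivity
  have hpa1u' : p*a*(1-u) ≤ p*a := by
    nlinarith [mul_nonneg (mul_nonneg hp.le ha_pos.le) hu0.le]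
  have hD_lb : (1:ℝ)/2 ≤ D := by rw [hD_def]; nlinarith
  have hD_ub : D ≤ 1 := by rw [hD_def]; linarith
  have hD_pos : 0 < D := by linarith
  have hN_abs : |N| ≤ 1 + p := by
    rw [abs_le]; constructor <;> rw [hN_def] <;> nlinarith
  have hNsq : N^2 ≤ (1+p)^2 := by
    have h := abs_le.1 hN_abs; nlinarith [h.1, h.2]
  have hΔsq : Δ^2 ≤ 4*(1+p)^2*a := by
    have hD2 : (0:ℝ) < D^2 := by positivity
    have he : Δ^2 = a*N^2/D^2 := by rw [hΔ_def, div_pow, mul_pow, hs2]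
    rw [he, div_le_iff₀ hD2]
    have h2 : a * N^2 ≤ a * (1+p)^2 := mul_le_mul_of_nonneg_left hNsq ha_pos.le
    have h3 : (1:ℝ)/4 ≤ D^2 := by nlinarith
    have h4 : (0:ℝ) ≤ 4*(1+p)^2*a := by positivity
    have h5 := mul_le_mul_of_nonneg_left h3 h4
    linarith [h2, h5]
  have hΔsq_half : Δ^2 ≤ 1/2 := by linarith
  have hΔ_abs : |Δ| ≤ 1 := by rw [← sq_le_one_iff_abs_le_one]; linarith
  -- g bounds
  have hg1 : |Real.sqrt (1 - Δ^2) - 1| ≤ Δ^2 := by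
    have h0 : (0:ℝ) ≤ 1 - Δ^2 := by linarith
    have hle : Real.sqrt (1 - Δ^2) ≤ 1 := Real.sqrt_le_one.2 (by linarith [sq_nonneg Δ])
    have hge : 1 - Δ^2 ≤ Real.sqrt (1 - Δ^2) := by
      nlinarith [Real.sq_sqrt h0, Real.sqrt_nonneg (1-Δ^2)]
    rw [abs_le]; constructor <;> [linarith; linarith]
  have hg2 : |Δ * Real.arcsin Δ| ≤ 2 * Δ^2 := by
    rw [abs_mul]
    have h := aux_arcsin_le hΔ_abs
    have hπ : π ≤ 4 := by linarith [Real.pi_le_four]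
    have h2 : |Δ| * |Real.arcsin Δ| ≤ |Δ| * (π/2 * |Δ|) :=
      mul_le_mul_of_nonneg_left h (abs_nonneg Δ)
    have h3 : |Δ| * |Δ| = Δ^2 := by rw [← abs_mul, ← sq, abs_sq]
    nlinarith [abs_nonneg Δ, sq_nonneg Δ]
  have hgfull : |Real.sqrt (1 - Δ^2) + Δ * Real.arcsin Δ - 1| ≤ 3 * Δ^2 := by
    have habs := abs_add_le (Real.sqrt (1 - Δ^2) - 1) (Δ * Real.arcsin Δ)
    have he : Real.sqrt (1 - Δ^2) - 1 + Δ * Real.arcsin Δ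
        = Real.sqrt (1 - Δ^2) + Δ * Real.arcsin Δ - 1 := by ring
    rw [he] at habs; linarith
  -- Sigma bounds
  have hsA1 : Real.sqrt A ≤ 1 := Real.sqrt_le_one.2 hA_le1
  have hsA_ge : A ≤ Real.sqrt A := by
    nlinarith [Real.sq_sqrt hA_pos.le, Real.sqrt_nonneg A]
  have hA78 : (7:ℝ)/8 ≤ A := by linarith
  have hB_lb : (1:ℝ)/2 ≤ B := by
    rw [hB_eq]; nlinarith [Real.sqrt_nonneg A]
  have hB_ub : B ≤ 1 := by rw [hB_eq]; nlinarith [Real.sqrt_nonneg A]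
  have hB_pos : (0:ℝ) < B := by linarith
  have hDB : |D - B| ≤ (1+p)*a := by
    have h1 : 0 ≤ A * (1 - Real.sqrt A) := by nlinarith
    have h2 : A * (1 - Real.sqrt A) ≤ a := by nlinarith
    rw [abs_le]; constructor <;> rw [hD_def, hB_eq] <;> nlinarith
  have hSv1 : |Sv - 1| ≤ 2*(1+p)*a := by
    have he : Sv - 1 = (D - B)/B := by rw [hSv_def]; field_simp
    rw [he, abs_div, abs_of_pos hB_pos, div_le_iff₀ hB_pos]
    nlinarith [hDB, mul_nonneg (mul_nonneg (by linarith : (0:ℝ) ≤ 1+p) ha_pos.le) (by linarith : (0:ℝ) ≤ 2*B - 1)]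
  have hSv_abs : |Sv| ≤ 2 := by
    have h := abs_le.1 hSv1
    rw [abs_le]; constructor <;> nlinarith [h.1, h.2, mul_nonneg hp.le ha_pos.le]
  -- final
  have key : (Real.sqrt (1 - Δ^2) + Δ * Real.arcsin Δ) * Sv - 1
      = (Real.sqrt (1 - Δ^2) + Δ * Real.arcsin Δ - 1) * Sv + (Sv - 1) := by ring
  rw [key]
  have hstep := abs_add_le ((Real.sqrt (1 - Δ^2) + Δ * Real.arcsin Δ - 1) * Sv) (Sv - 1)
  have hmul : |(Real.sqrt (1 - Δ^2) + Δ * Real.arcsin Δ - 1) * Sv| ≤ (3*Δ^2) * 2 := by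
    rw [abs_mul]
    exact mul_le_mul hgfull hSv_abs (abs_nonneg _) (by positivity)
  have : (3*Δ^2)*2 ≤ 24*(1+p)^2*a := by linarith
  linarith

lemma aux_exp_sq {x : ℝ} (hx : 0 ≤ x) : (1 + x/2)^2 ≤ Real.exp x := by
  have he : Real.exp x = (Real.exp (x/2))^2 := by
    rw [sq, ← Real.exp_add]; ring_nf
  rw [he]
  have h := Real.add_one_le_exp (x/2)
  nlinarith [Real.exp_pos (x/2)]

lemma aux_exp_ub {x : ℝ} (h0 : 0 ≤ x) (h1 : x ≤ 1/2) :
    (1+x)*Real.exp (-x) ≤ 1 - x^2/8 := by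
  have hs := aux_exp_sq h0
  have hp := Real.exp_pos x
  have hi : Real.exp (-x) = (Real.exp x)⁻¹ := Real.exp_neg x
  rw [hi]
  rw [mul_inv_le_iff₀ hp]
  have hc : (0:ℝ) ≤ 1 - x^2/8 := by nlinarith
  nlinarith [mul_le_mul_of_nonneg_left hs hc, sq_nonneg x, mul_nonneg (mul_nonneg h0 h0) h0]

set_option maxHeartbeats 1600000 in
lemma aux_near1 {u τ : ℝ} (hτ : τ > -1/2) (hu0 : 1/2 ≤ u) (hu1 : u < 1)
    (hpe : (2*τ+1)*(1-u) ≤ 1/8) :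
    |(Real.sqrt (1 - (u^(τ+1/2) * (u*(1 - u^(2*τ+1)) - (2*τ+1)*(1-u)) /
        (1 - u^(2*τ+1) - (2*τ+1)*u^(2*τ+1)*(1-u)))^2)
      + (u^(τ+1/2) * (u*(1 - u^(2*τ+1)) - (2*τ+1)*(1-u)) /
        (1 - u^(2*τ+1) - (2*τ+1)*u^(2*τ+1)*(1-u)))
        * Real.arcsin (u^(τ+1/2) * (u*(1 - u^(2*τ+1)) - (2*τ+1)*(1-u)) /
        (1 - u^(2*τ+1) - (2*τ+1)*u^(2*τ+1)*(1-u))))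
      * ((1 - u^(2*τ+1) - (2*τ+1)*(1-u)*u^(2*τ+1)) / (1 - u^(2*τ+1))^((3:ℝ)/2))|
      ≤ (1 + 2*(8*(1+2*(2*τ+1))/(2*τ+1)))
          * ((2*(2*τ+1)+2*(2*τ+1)^2)/(((2*τ+1)/2)^((3:ℝ)/2))) * Real.sqrt (1-u) := by
  have hnum : 1 - u^(2*τ+1) - (2*τ+1)*(1-u)*u^(2*τ+1)
      = 1 - u^(2*τ+1) - (2*τ+1)*u^(2*τ+1)*(1-u) := by ring
  rw [hnum]
  have hu0' : (0:ℝ) < u := by linarith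
  set p : ℝ := 2*τ+1 with hp_def
  have hp : 0 < p := by rw [hp_def]; linarith
  set ε : ℝ := 1 - u with hε_def
  have hε_pos : 0 < ε := by rw [hε_def]; linarith
  have hε_half : ε ≤ 1/2 := by rw [hε_def]; linarith
  have hu_eq : u = 1 - ε := by rw [hε_def]; ring
  set a : ℝ := u^(2*τ+1) with ha_def
  set s : ℝ := u^(τ+1/2) with hs_def
  have ha_pos : 0 < a := Real.rpow_pos_of_pos hu0' _
  have hs_pos : 0 < s := Real.rpow_pos_of_pos hu0' _
  have hs_le1 : s ≤ 1 := Real.rpow_le_one hu0'.le hu1.le (by linarith)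
  set L : ℝ := -Real.log u with hL_def
  have hL1 : ε ≤ L := by
    have := Real.log_le_sub_one_of_pos hu0'
    rw [hL_def, hε_def]; linarith
  have huL : u * L ≤ ε := by
    have hlog := Real.log_le_sub_one_of_pos (inv_pos.2 hu0')
    rw [Real.log_inv] at hlog
    have huu : u * u⁻¹ = 1 := mul_inv_cancel₀ (ne_of_gt hu0')
    have := mul_le_mul_of_nonneg_left hlog hu0'.le
    rw [hL_def, hε_def]
    nlinarith
  have hL3 : L ≤ ε + 2*ε^2 := by nlinarith [huL]
  have hL2 : L ≤ 2*ε := by nlinarith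
  have ha_eq : a = Real.exp (-(p*L)) := by
    rw [ha_def, ← hp_def, Real.rpow_def_of_pos hu0', hL_def]
    congr 1; ring
  have h2 : 1 - p*L ≤ a := by
    have := Real.add_one_le_exp (-(p*L))
    rw [← ha_eq] at this; linarith
  have h1 : a * (1 + p*L) ≤ 1 := by
    have e1 := Real.add_one_le_exp (p*L)
    have e2 : a * Real.exp (p*L) = 1 := by
      rw [ha_eq, ← Real.exp_add]; simp
    nlinarith [ha_pos]
  have hpe' : p * ε ≤ 1/8 := by rw [hp_def, hε_def]; exact hpe
  have h3 : (1+p*ε)*a ≤ 1 - (p*ε)^2/8 := by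
    have hmono : a ≤ Real.exp (-(p*ε)) := by
      rw [ha_eq]
      apply Real.exp_le_exp.2
      have := mul_le_mul_of_nonneg_left hL1 hp.le
      linarith
    have hub := aux_exp_ub (by positivity : (0:ℝ) ≤ p*ε) (by linarith)
    calc (1+p*ε)*a ≤ (1+p*ε)*Real.exp (-(p*ε)) :=
          mul_le_mul_of_nonneg_left hmono (by positivity)
      _ = (1+p*ε)*Real.exp (-(p*ε)) := rfl
      _ ≤ 1 - (p*ε)^2/8 := by
          have : -(p*ε) = -(p*ε) := rfl
          calc (1+p*ε)*Real.exp (-(p*ε)) = (1+(p*ε))*Real.exp (-(p*ε)) := by ring_nf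
            _ ≤ 1 - (p*ε)^2/8 := hub
  clear_value p a s ε L
  clear hpe ha_eq hp_def ha_def hs_def hε_def hL_def hnum
  -- algebraic consequences
  have hpL : p*L ≤ 1/4 := by nlinarith [mul_le_mul_of_nonneg_left hL2 hp.le]
  have ha_lb34 : 3/4 ≤ a := by nlinarith
  have k1 : p*ε ≤ p*L := mul_le_mul_of_nonneg_left hL1 hp.le
  set A : ℝ := 1 - a with hA_def
  clear_value A
  have hA_lb : p*ε/2 ≤ A := by
    have k2 : (3:ℝ)/4*(p*ε) ≤ a*(p*L) :=
      mul_le_mul ha_lb34 k1 (by positivity) (by linarith)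
    rw [hA_def]; nlinarith
  have hA_pos : 0 < A := by
    have : 0 < p*ε/2 := by positivity
    linarith
  have k3 : p*L ≤ p*(2*ε) := mul_le_mul_of_nonneg_left hL2 hp.le
  have hA_ub : A ≤ 2*p*ε := by rw [hA_def]; nlinarith
  set D : ℝ := A - p*a*ε with hD_def
  set N : ℝ := u*A - p*ε with hN_def
  clear_value D N
  have hD_ub : D ≤ (2*p+2*p^2)*ε^2 := by
    have k4 : p*(L-ε) ≤ p*(2*ε^2) := mul_le_mul_of_nonneg_left (by linarith) hp.le
    have k5 : p*(1-p*L)*ε ≤ p*a*ε :=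
      mul_le_mul_of_nonneg_right (mul_le_mul_of_nonneg_left h2 hp.le) hε_pos.le
    have k6 := mul_le_mul_of_nonneg_left k3 (mul_nonneg hp.le hε_pos.le)
    rw [hD_def, hA_def]; nlinarith
  have hD_lb : (p*ε)^2/8 ≤ D := by rw [hD_def, hA_def]; nlinarith [h3]
  have hD_pos : 0 < D := lt_of_lt_of_le (by positivity) hD_lb
  have hN_ub : N ≤ 0 := by
    have k7 : u*A ≤ u*(p*L) := mul_le_mul_of_nonneg_left (by rw [hA_def]; nlinarith) hu0'.le
    have k8 : p*(u*L) ≤ p*ε := mul_le_mul_of_nonneg_left huL hp.le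
    rw [hN_def]; nlinarith
  have hN_lb : -((p+2*p^2)*ε^2) ≤ N := by
    have ma : 1 - 2*p*ε ≤ a := by nlinarith
    have mb : p*ε*(1-2*p*ε) ≤ p*ε*a := mul_le_mul_of_nonneg_left ma (by positivity)
    have mc : u*(p*ε*(1-2*p*ε)) ≤ u*(p*ε*a) := mul_le_mul_of_nonneg_left mb hu0'.le
    have md0 : ε*(p*a) ≤ L*(p*a) :=
      mul_le_mul_of_nonneg_right hL1 (by positivity)
    have md1 : p*ε*a ≤ A := by rw [hA_def]; nlinarith
    have md : u*(p*ε*a) ≤ u*A := mul_le_mul_of_nonneg_left md1 hu0'.le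
    have he1 : u*(p*ε*(1-2*p*ε)) = p*ε - p*ε^2 - 2*p^2*ε^2 + 2*p^2*ε^3 := by
      rw [hu_eq]; ring
    have he2 : (0:ℝ) ≤ 2*p^2*ε^3 := by positivity
    rw [hN_def]; nlinarith
  -- Δ bound
  set Δ : ℝ := s * N / D with hΔ_def
  set M : ℝ := 8*(1+2*p)/p with hM_def
  clear_value Δ M
  have hM_pos : 0 < M := by rw [hM_def]; positivity
  have hΔ_abs : |Δ| ≤ M := by
    rw [hΔ_def, abs_div, abs_of_pos hD_pos, div_le_iff₀ hD_pos, abs_mul,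
      abs_of_pos hs_pos]
    have hNa : |N| ≤ (p+2*p^2)*ε^2 := abs_le.2 ⟨by linarith, by nlinarith [sq_nonneg ε, mul_pos hp hp]⟩
    have hsN : s*|N| ≤ (p+2*p^2)*ε^2 := by
      nlinarith [abs_nonneg N, mul_le_mul_of_nonneg_right hs_le1 (abs_nonneg N)]
    have hMD : M*((p*ε)^2/8) ≤ M*D := mul_le_mul_of_nonneg_left hD_lb hM_pos.le
    have hid : M*((p*ε)^2/8) = (p+2*p^2)*ε^2 := by
      rw [hM_def]; field_simp
    linarith
  -- g bound
  have harc : |Real.arcsin Δ| ≤ π/2 :=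
    abs_le.2 ⟨by linarith [Real.neg_pi_div_two_le_arcsin Δ], Real.arcsin_le_pi_div_two Δ⟩
  have hπ4 : π ≤ 4 := by linarith [Real.pi_le_four]
  have hg_abs : |Real.sqrt (1 - Δ^2) + Δ * Real.arcsin Δ| ≤ 1 + 2*M := by
    have h1' : |Real.sqrt (1 - Δ^2)| ≤ 1 := by
      rw [abs_of_nonneg (Real.sqrt_nonneg _)]
      exact Real.sqrt_le_one.2 (by nlinarith [sq_nonneg Δ])
    have h2' : |Δ * Real.arcsin Δ| ≤ 2*M := by
      rw [abs_mul]
      nlinarith [mul_le_mul hΔ_abs harc (abs_nonneg _) hM_pos.le, abs_nonneg Δ,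
        abs_nonneg (Real.arcsin Δ), mul_le_mul_of_nonneg_left hπ4 hM_pos.le]
    calc |Real.sqrt (1 - Δ^2) + Δ * Real.arcsin Δ|
        ≤ |Real.sqrt (1 - Δ^2)| + |Δ * Real.arcsin Δ| := abs_add_le _ _
      _ ≤ 1 + 2*M := add_le_add h1' h2'
  -- Sigma bound
  set B : ℝ := A^((3:ℝ)/2) with hB_def
  have hB_pos : 0 < B := by rw [hB_def]; exact Real.rpow_pos_of_pos hA_pos _
  have hK_pos : (0:ℝ) < (p/2)^((3:ℝ)/2) := Real.rpow_pos_of_pos (by positivity) _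
  have hsqε : Real.sqrt ε * Real.sqrt ε = ε := Real.mul_self_sqrt hε_pos.le
  have hB_lb : (p/2)^((3:ℝ)/2) * (ε * Real.sqrt ε) ≤ B := by
    have r1 : ((p/2)*ε)^((3:ℝ)/2) ≤ A^((3:ℝ)/2) :=
      Real.rpow_le_rpow (by positivity) (by linarith) (by norm_num)
    have r2 : ((p/2)*ε)^((3:ℝ)/2) = (p/2)^((3:ℝ)/2) * ε^((3:ℝ)/2) :=
      Real.mul_rpow (by positivity) hε_pos.le
    have r3 : ε^((3:ℝ)/2) = ε * Real.sqrt ε := by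
      rw [show (3:ℝ)/2 = 1+1/2 by norm_num, Real.rpow_add hε_pos, Real.rpow_one,
        ← Real.sqrt_eq_rpow]
    rw [hB_def, ← r3, ← r2]; exact r1
  clear_value B
  set C1 : ℝ := (2*p+2*p^2)/((p/2)^((3:ℝ)/2)) with hC1_def
  clear_value C1
  have hC1_pos : 0 < C1 := by rw [hC1_def]; positivity
  set Sv : ℝ := D / B with hSv_def
  clear_value Sv
  have hSv_nonneg : 0 ≤ Sv := by rw [hSv_def]; positivity
  have hSv_ub : Sv ≤ C1 * Real.sqrt ε := by
    rw [hSv_def, div_le_iff₀ hB_pos]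
    have t0 : 0 ≤ C1 * Real.sqrt ε := by positivity
    have t1 := mul_le_mul_of_nonneg_left hB_lb t0
    have t2 : C1 * Real.sqrt ε * ((p/2)^((3:ℝ)/2) * (ε * Real.sqrt ε))
        = (2*p+2*p^2)*ε^2 := by
      rw [hC1_def]
      field_simp
      ring_nf
      rw [Real.sq_sqrt hε_pos.le]
    linarith
  -- final
  calc |(Real.sqrt (1 - Δ^2) + Δ * Real.arcsin Δ) * Sv|
      = |Real.sqrt (1 - Δ^2) + Δ * Real.arcsin Δ| * |Sv| := abs_mul _ _
    _ ≤ (1 + 2*M) * (C1 * Real.sqrt ε) := by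
        rw [abs_of_nonneg hSv_nonneg]
        exact mul_le_mul hg_abs hSv_ub hSv_nonneg (by positivity)
    _ = (1 + 2*M) * C1 * Real.sqrt ε := by ring

theorem stmt_15 (τ : ℝ) (hτ : τ > -1/2)
    (Δ Sg f : ℝ → ℝ)
    (hΔ : ∀ u ∈ Set.Ioo (0:ℝ) 1, Δ u =
      u^(τ+1/2) * (u*(1 - u^(2*τ+1)) - (2*τ+1)*(1-u)) /
        (1 - u^(2*τ+1) - (2*τ+1)*u^(2*τ+1)*(1-u)))
    (hSg : ∀ u ∈ Set.Ioo (0:ℝ) 1, Sg u =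
      (1 - u^(2*τ+1) - (2*τ+1)*(1-u)*u^(2*τ+1)) / (1 - u^(2*τ+1))^((3:ℝ)/2))
    (hf : ∀ u ∈ Set.Ioo (0:ℝ) 1, f u =
      (Real.sqrt (1 - (Δ u)^2) + Δ u * Real.arcsin (Δ u)) * Sg u - 1) :
    ∃ C > 0, ∃ u₀ ∈ Set.Ioo (0:ℝ) 1,
      (∀ u ∈ Set.Ioo (0:ℝ) u₀, |f u| ≤ C * u^(2*τ+1)) ∧
      (∀ u ∈ Set.Ioo (1-u₀) 1, |f u + 1| ≤ C * Real.sqrt (1-u)) := by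
  have hp : (0:ℝ) < 2*τ+1 := by linarith
  set p : ℝ := 2*τ+1 with hp_def
  -- constants
  set C0 : ℝ := 24*(1+p)^2 + 2*(1+p) with hC0_def
  set Cb : ℝ := (1 + 2*(8*(1+2*p)/p)) * ((2*p+2*p^2)/((p/2)^((3:ℝ)/2))) with hCb_def
  have hC0_pos : 0 < C0 := by rw [hC0_def]; nlinarith
  have hCb_pos : 0 < Cb := by
    rw [hCb_def]
    apply mul_pos
    · have : 0 < 8*(1+2*p)/p := div_pos (by linarith) hp
      linarith
    · exact div_pos (by nlinarith) (Real.rpow_pos_of_pos (by linarith) _)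
  set C : ℝ := C0 + Cb with hC_def
  have hC_pos : 0 < C := by rw [hC_def]; linarith
  -- u₀
  set a0 : ℝ := 1/(8*(1+p)^2) with ha0_def
  have ha0_pos : 0 < a0 := by rw [ha0_def]; positivity
  have ha0_lt1 : a0 < 1 := by
    rw [ha0_def, div_lt_one (by positivity)]; nlinarith
  set δ0 : ℝ := a0^(p⁻¹) with hδ0_def
  have hδ0_pos : 0 < δ0 := Real.rpow_pos_of_pos ha0_pos _
  have hδ0_lt1 : δ0 < 1 := by
    rw [hδ0_def]
    exact Real.rpow_lt_one ha0_pos.le ha0_lt1 (by positivity)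
  have hδ0_pow : δ0^p = a0 := by
    rw [hδ0_def, ← Real.rpow_mul ha0_pos.le, inv_mul_cancel₀ (ne_of_gt hp), Real.rpow_one]
  set η1 : ℝ := min (1/2) (1/(8*p)) with hη1_def
  have hη1_pos : 0 < η1 := by
    rw [hη1_def]; apply lt_min (by norm_num) (by positivity)
  set u₀ : ℝ := min δ0 η1 with hu₀_def
  have hu₀_pos : 0 < u₀ := lt_min hδ0_pos hη1_pos
  have hu₀_lt1 : u₀ < 1 := by
    have : u₀ ≤ η1 := min_le_right _ _
    have h2 : η1 ≤ 1/2 := min_le_left _ _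
    linarith
  refine ⟨C, hC_pos, u₀, ⟨hu₀_pos, hu₀_lt1⟩, ?_, ?_⟩
  · -- near zero
    intro u hu
    obtain ⟨hu0, huu⟩ := hu
    have hu1 : u < 1 := lt_trans huu hu₀_lt1
    have hmem : u ∈ Set.Ioo (0:ℝ) 1 := ⟨hu0, hu1⟩
    have ha' : u^(2*τ+1) ≤ 1/(8*(1+(2*τ+1))^2) := by
      have hlt : u < δ0 := lt_of_lt_of_le huu (min_le_left _ _)
      have := Real.rpow_lt_rpow hu0.le hlt hp
      rw [hδ0_pow] at this
      rw [← hp_def, ← ha0_def]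
      exact this.le
    rw [hf u hmem, hΔ u hmem, hSg u hmem]
    refine le_trans (aux_near0 hτ hu0 hu1 ha') ?_
    have hap : 0 < u^(2*τ+1) := Real.rpow_pos_of_pos hu0 _
    have : (24*(1+(2*τ+1))^2 + 2*(1+(2*τ+1))) = C0 := by rw [hC0_def, hp_def]
    rw [this]
    nlinarith [hap]
  · -- near one
    intro u hu
    obtain ⟨huu, hu1⟩ := hu
    have hu12 : 1/2 ≤ u := by
      have h1 : u₀ ≤ η1 := min_le_right _ _
      have h2 : η1 ≤ 1/2 := min_le_left _ _
      linarith
    have hu0 : 0 < u := by linarith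
    have hmem : u ∈ Set.Ioo (0:ℝ) 1 := ⟨hu0, hu1⟩
    have hpe : (2*τ+1)*(1-u) ≤ 1/8 := by
      have h1 : u₀ ≤ η1 := min_le_right _ _
      have h2 : η1 ≤ 1/(8*p) := min_le_right _ _
      have h3 : 1 - u < 1/(8*p) := by linarith
      rw [← hp_def]
      calc p*(1-u) ≤ p*(1/(8*p)) := by
            apply mul_le_mul_of_nonneg_left h3.le hp.le
        _ = 1/8 := by field_simp
    have hkey : f u + 1 = (Real.sqrt (1 - (Δ u)^2) + Δ u * Real.arcsin (Δ u)) * Sg u := by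
      rw [hf u hmem]; ring
    rw [hkey, hΔ u hmem, hSg u hmem]
    refine le_trans (aux_near1 hτ hu12 hu1 hpe) ?_
    have hs : 0 ≤ Real.sqrt (1-u) := Real.sqrt_nonneg _
    have : (1 + 2*(8*(1+2*(2*τ+1))/(2*τ+1)))
          * ((2*(2*τ+1)+2*(2*τ+1)^2)/(((2*τ+1)/2)^((3:ℝ)/2))) = Cb := by
      rw [hCb_def, hp_def]
    rw [this]
    nlinarith [mul_le_mul_of_nonneg_right (by linarith : Cb ≤ C) hs]
end

section
/- For τ > -1/2, both integrals ∫₀^∞ |f_τ(sech²v)| dv and ∫₀^∞ v·|f_τ(sech²v)| dv are finite. -/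
open Real Set MeasureTheory

lemma aux_nonneg {F F' : ℝ → ℝ} {u : ℝ} (hu1 : u ≤ 1)
    (hd : ∀ x ∈ Set.Icc u 1, HasDerivAt F (F' x) x)
    (hd0 : ∀ x ∈ Set.Icc u 1, F' x ≤ 0)
    (h1 : F 1 = 0) : 0 ≤ F u := by
  rcases eq_or_lt_of_le hu1 with h | h
  · rw [h, h1]
  · have hmono : AntitoneOn F (Set.Icc u 1) := by
      apply antitoneOn_of_deriv_nonpos (convex_Icc u 1)
      · intro x hx
        exact (hd x hx).continuousAt.continuousWithinAt
      · intro x hx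
        rw [interior_Icc] at hx
        exact (hd x (Set.Ioo_subset_Icc_self hx)).differentiableAt.differentiableWithinAt
      · intro x hx
        rw [interior_Icc] at hx
        rw [(hd x (Set.Ioo_subset_Icc_self hx)).deriv]
        exact hd0 x (Set.Ioo_subset_Icc_self hx)
    have h2 := hmono (Set.left_mem_Icc.2 hu1) (Set.right_mem_Icc.2 hu1) hu1
    rw [h1] at h2; exact h2

lemma bern_high {a u : ℝ} (ha : 0 < a) (hu : 0 < u) (hu1 : u ≤ 1) :
    1 - u ^ a ≤ max a 1 * (1 - u) := by
  rcases le_total a 1 with h | h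
  · have : u ^ (1:ℝ) ≤ u ^ a := Real.rpow_le_rpow_of_exponent_ge hu hu1 h
    rw [Real.rpow_one] at this
    have hm : max a 1 = 1 := max_eq_right h
    rw [hm]; nlinarith
  · have hb := one_add_mul_self_le_rpow_one_add (s := u - 1) (p := a) (by linarith) h
    have : (1 + (u-1)) ^ a = u ^ a := by norm_num
    rw [this] at hb
    have hm : max a 1 = a := max_eq_left h
    rw [hm]; nlinarith

-- lower Bernoulli: min a 1 * (1-u) ≤ 1 - u^a

lemma bern_low {a u : ℝ} (ha : 0 < a) (hu : 0 < u) (hu1 : u ≤ 1) :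
    min a 1 * (1 - u) ≤ 1 - u ^ a := by
  rcases le_total a 1 with h | h
  · have hb := rpow_one_add_le_one_add_mul_self (s := u - 1) (p := a) (by linarith) ha.le h
    have : (1 + (u-1)) ^ a = u ^ a := by norm_num
    rw [this] at hb
    have hm : min a 1 = a := min_eq_left h
    rw [hm]; nlinarith
  · have : u ^ a ≤ u ^ (1:ℝ) := Real.rpow_le_rpow_of_exponent_ge hu hu1 h
    rw [Real.rpow_one] at this
    have hm : min a 1 = 1 := min_eq_right h
    rw [hm]; nlinarith

-- F3 : N ≤ 0, i.e. 0 ≤ a(1-u) - u(1-u^a)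

lemma F3 {a u : ℝ} (ha : 0 < a) (hu : 0 < u) (hu1 : u ≤ 1) :
    0 ≤ a * (1 - u) - u * (1 - u ^ a) := by
  apply aux_nonneg (F' := fun x => -(1+a)*(1 - x ^ a)) hu1
  · intro x hx
    have hx0 : 0 < x := lt_of_lt_of_le hu hx.1
    have hp : HasDerivAt (fun y : ℝ => y ^ a) (a * x ^ (a-1)) x :=
      Real.hasDerivAt_rpow_const (Or.inl hx0.ne')
    have h1 := (((hasDerivAt_const x (1:ℝ)).sub (hasDerivAt_id x)).const_mul a).sub
        ((hasDerivAt_id x).mul ((hasDerivAt_const x (1:ℝ)).sub hp))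
    simp only [Pi.sub_apply, Pi.mul_apply, Pi.pow_apply, id_eq] at h1
    refine h1.congr_deriv ?_
    have hxx : x ^ (a-1) * x = x ^ a := by
      rw [← Real.rpow_add_one hx0.ne' (a-1)]; ring_nf
    nlinarith [hxx]
  · intro x hx
    have hx0 : 0 < x := lt_of_lt_of_le hu hx.1
    have : x ^ a ≤ 1 := Real.rpow_le_one hx0.le hx.2 ha.le
    nlinarith
  · norm_num

lemma F4 {a u : ℝ} (ha : 0 < a) (hu : 0 < u) (hu1 : u ≤ 1) :
    0 ≤ (1+a) * max a 1 / 2 * (1-u)^2 - (a * (1 - u) - u * (1 - u ^ a)) := by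
  apply aux_nonneg (F' := fun x => -((1+a) * max a 1) * (1-x) + (1+a)*(1 - x ^ a)) hu1
  · intro x hx
    have hx0 : 0 < x := lt_of_lt_of_le hu hx.1
    have hp : HasDerivAt (fun y : ℝ => y ^ a) (a * x ^ (a-1)) x :=
      Real.hasDerivAt_rpow_const (Or.inl hx0.ne')
    have h1 := ((((hasDerivAt_const x (1:ℝ)).sub (hasDerivAt_id x)).pow 2).const_mul
        ((1+a) * max a 1 / 2)).sub
      ((((hasDerivAt_const x (1:ℝ)).sub (hasDerivAt_id x)).const_mul a).sub
        ((hasDerivAt_id x).mul ((hasDerivAt_const x (1:ℝ)).sub hp)))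
    simp only [Pi.sub_apply, Pi.mul_apply, Pi.pow_apply, id_eq] at h1
    refine h1.congr_deriv ?_
    have hxx : x ^ (a-1) * x = x ^ a := by
      rw [← Real.rpow_add_one hx0.ne' (a-1)]; ring_nf
    nlinarith [hxx]
  · intro x hx
    have hx0 : 0 < x := lt_of_lt_of_le hu hx.1
    have hb := bern_high ha hx0 hx.2
    nlinarith [hx.2, ha.le]
  · norm_num

-- F5 : g ≤ (1+a)(1-u)(1-u^a)

lemma F5 {a u : ℝ} (ha : 0 < a) (hu : 0 < u) (hu1 : u ≤ 1) :
    0 ≤ (1+a) * ((1-u) * (1 - u ^ a)) - (1 - u ^ a - a * (u ^ a * (1-u))) := by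
  apply aux_nonneg (F' := fun x => -(1+a) * (1 - x ^ a)) hu1
  · intro x hx
    have hx0 : 0 < x := lt_of_lt_of_le hu hx.1
    have hp : HasDerivAt (fun y : ℝ => y ^ a) (a * x ^ (a-1)) x :=
      Real.hasDerivAt_rpow_const (Or.inl hx0.ne')
    have h1 := ((((hasDerivAt_const x (1:ℝ)).sub (hasDerivAt_id x)).mul
        ((hasDerivAt_const x (1:ℝ)).sub hp)).const_mul (1+a)).sub
      (((hasDerivAt_const x (1:ℝ)).sub hp).sub
        ((hp.mul ((hasDerivAt_const x (1:ℝ)).sub (hasDerivAt_id x))).const_mul a))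
    simp only [Pi.sub_apply, Pi.mul_apply, Pi.pow_apply, id_eq] at h1
    refine h1.congr_deriv ?_
    have hxx : x ^ (a-1) * x = x ^ a := by
      rw [← Real.rpow_add_one hx0.ne' (a-1)]; ring_nf
    nlinarith [hxx]
  · intro x hx
    have hx0 : 0 < x := lt_of_lt_of_le hu hx.1
    have : x ^ a ≤ 1 := Real.rpow_le_one hx0.le hx.2 ha.le
    nlinarith
  · norm_num

-- F6 : g ≥ c' (1-u)^2 on [δ,1]

lemma F6 {a δ u : ℝ} (ha : 0 < a) (hδ : 0 < δ) (hδu : δ ≤ u) (hu1 : u ≤ 1) :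
    0 ≤ (1 - u ^ a - a * (u ^ a * (1-u))) - a*(1+a)*(min (δ ^ (a-1)) 1)/2 * (1-u)^2 := by
  have hu : 0 < u := lt_of_lt_of_le hδ hδu
  apply aux_nonneg
    (F' := fun x => -(a*(1+a)) * (x ^ (a-1) * (1-x)) + a*(1+a)*(min (δ ^ (a-1)) 1) * (1-x)) hu1
  · intro x hx
    have hx0 : 0 < x := lt_of_lt_of_le hu hx.1
    have hp : HasDerivAt (fun y : ℝ => y ^ a) (a * x ^ (a-1)) x :=
      Real.hasDerivAt_rpow_const (Or.inl hx0.ne')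
    have h1 := (((hasDerivAt_const x (1:ℝ)).sub hp).sub
        ((hp.mul ((hasDerivAt_const x (1:ℝ)).sub (hasDerivAt_id x))).const_mul a)).sub
      ((((hasDerivAt_const x (1:ℝ)).sub (hasDerivAt_id x)).pow 2).const_mul
        (a*(1+a)*(min (δ ^ (a-1)) 1)/2))
    simp only [Pi.sub_apply, Pi.mul_apply, Pi.pow_apply, id_eq] at h1
    refine h1.congr_deriv ?_
    have hxx : x ^ (a-1) * x = x ^ a := by
      rw [← Real.rpow_add_one hx0.ne' (a-1)]; ring_nf
    nlinarith [hxx]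
  · intro x hx
    have hx0 : 0 < x := lt_of_lt_of_le hu hx.1
    have hmin : min (δ ^ (a-1)) 1 ≤ x ^ (a-1) := by
      rcases le_total 1 a with h | h
      · exact le_trans (min_le_left _ _) (Real.rpow_le_rpow hδ.le (le_trans hδu hx.1) (by linarith))
      · exact le_trans (min_le_right _ _)
          (Real.one_le_rpow_of_pos_of_le_one_of_nonpos hx0 hx.2 (by linarith))
    have h1x : 0 ≤ 1 - x := by linarith [hx.2]
    have key := mul_le_mul_of_nonneg_left (mul_le_mul_of_nonneg_right hmin h1x)
      (by positivity : (0:ℝ) ≤ a*(1+a))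
    nlinarith [key]
  · norm_num

-- g > 0

lemma g_pos {a u : ℝ} (ha : 0 < a) (hu : 0 < u) (hu1 : u < 1) :
    0 < 1 - u ^ a - a * (u ^ a * (1-u)) := by
  have h1 : u ^ a ≤ Real.exp (a * (u - 1)) := by
    rw [Real.rpow_def_of_pos hu]
    apply Real.exp_le_exp.2
    have := Real.log_le_sub_one_of_pos hu
    nlinarith
  have h2 : 1 + a * (1 - u) < Real.exp (a * (1 - u)) := by
    have := Real.add_one_lt_exp (x := a * (1-u)) (by nlinarith : a * (1-u) ≠ 0)
    linarith
  have h3 : u ^ a * (1 + a * (1-u)) < 1 := by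
    have he : Real.exp (a * (u-1)) * Real.exp (a * (1-u)) = 1 := by
      rw [← Real.exp_add]; ring_nf; exact Real.exp_zero
    have hpos : 0 < u ^ a := Real.rpow_pos_of_pos hu a
    calc u ^ a * (1 + a * (1-u)) < Real.exp (a * (u-1)) * Real.exp (a * (1-u)) := by
          apply mul_lt_mul' h1 h2 (by nlinarith) (Real.exp_pos _)
      _ = 1 := he
  nlinarith [Real.rpow_pos_of_pos hu a]

lemma pow32 {P : ℝ} (hP : 0 < P) : P ^ ((3:ℝ)/2) = P * Real.sqrt P := by
  rw [show (3:ℝ)/2 = 1 + 1/2 by norm_num, Real.rpow_add hP, Real.rpow_one, Real.sqrt_eq_rpow]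

lemma sg_bound {a u : ℝ} (ha : 0 < a) (hu0 : 0 < u) (hu1 : u < 1) :
    0 ≤ (1 - u^a - a*(1-u)*u^a) / (1-u^a)^((3:ℝ)/2) ∧
    (1 - u^a - a*(1-u)*u^a) / (1-u^a)^((3:ℝ)/2) ≤ (1+a)/Real.sqrt (min a 1) := by
  have hP : 0 < 1 - u^a := by
    have := Real.rpow_lt_one hu0.le hu1 ha; linarith
  have hG : 0 < 1 - u^a - a*(1-u)*u^a := by
    have h := g_pos ha hu0 hu1; nlinarith [h]
  have hPow := pow32 hP
  have hD : 0 < (1-u^a) * Real.sqrt (1-u^a) := mul_pos hP (Real.sqrt_pos.2 hP)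
  constructor
  · apply div_nonneg hG.le; rw [hPow]; exact hD.le
  · rw [hPow]
    have hmin : 0 < min a 1 := lt_min ha one_pos
    have hsmin : 0 < Real.sqrt (min a 1) := Real.sqrt_pos.2 hmin
    rw [div_le_div_iff₀ hD hsmin]
    have h5 := F5 ha hu0 hu1.le
    have h5' : 1 - u^a - a*(1-u)*u^a ≤ (1+a) * ((1-u) * (1-u^a)) := by nlinarith [h5]
    -- √min * (1-u) ≤ √P
    have hs1 : Real.sqrt (1-u) ≥ 1 - u := by
      rw [ge_iff_le, Real.le_sqrt (by linarith) (by linarith)]; nlinarith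
    have hs2 : Real.sqrt (min a 1) * (1-u) ≤ Real.sqrt (1-u^a) := by
      calc Real.sqrt (min a 1) * (1-u) ≤ Real.sqrt (min a 1) * Real.sqrt (1-u) := by
            apply mul_le_mul_of_nonneg_left hs1 (Real.sqrt_nonneg _)
        _ = Real.sqrt (min a 1 * (1-u)) := (Real.sqrt_mul hmin.le _).symm
        _ ≤ Real.sqrt (1-u^a) := Real.sqrt_le_sqrt (bern_low ha hu0 hu1.le)
    have key : (1+a) * ((1-u) * (1-u^a)) * Real.sqrt (min a 1) ≤
        (1+a) * ((1-u^a) * Real.sqrt (1-u^a)) := by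
      have := mul_le_mul_of_nonneg_left hs2 (by nlinarith : (0:ℝ) ≤ (1+a)*(1-u^a))
      nlinarith [this]
    calc (1 - u^a - a*(1-u)*u^a) * Real.sqrt (min a 1)
        ≤ (1+a) * ((1-u) * (1-u^a)) * Real.sqrt (min a 1) := by
          apply mul_le_mul_of_nonneg_right h5' (Real.sqrt_nonneg _)
      _ ≤ (1+a) * ((1-u^a) * Real.sqrt (1-u^a)) := key

lemma habs1 {x : ℝ} (hx1 : |x| ≤ 1) :
    |Real.sqrt (1 - x^2) + x * Real.arcsin x - 1| ≤ (1 + Real.pi/2) * |x| := by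
  have harc : |Real.arcsin x| ≤ Real.pi/2 :=
    abs_le.2 ⟨by linarith [Real.neg_pi_div_two_le_arcsin x], Real.arcsin_le_pi_div_two x⟩
  have hx2 : x^2 ≤ |x| := by nlinarith [sq_abs x, abs_nonneg x]
  have hs1 : Real.sqrt (1 - x^2) ≤ 1 := Real.sqrt_le_one.2 (by nlinarith [sq_nonneg x])
  have hs2 : 1 - x^2 ≤ Real.sqrt (1 - x^2) := by
    rw [Real.le_sqrt (by nlinarith [sq_abs x]) (by nlinarith [sq_abs x])]
    nlinarith [sq_abs x, sq_nonneg x, abs_nonneg x]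
  have h1 : |Real.sqrt (1 - x^2) - 1| ≤ x^2 := by
    rw [abs_le]; constructor
    · linarith
    · nlinarith [Real.sqrt_nonneg (1 - x^2), sq_nonneg x]
  have h2 : |x * Real.arcsin x| ≤ |x| * (Real.pi/2) := by
    rw [abs_mul]; exact mul_le_mul_of_nonneg_left harc (abs_nonneg _)
  calc |Real.sqrt (1 - x^2) + x * Real.arcsin x - 1|
      = |(Real.sqrt (1 - x^2) - 1) + x * Real.arcsin x| := by ring_nf
    _ ≤ |Real.sqrt (1 - x^2) - 1| + |x * Real.arcsin x| := abs_add_le _ _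
    _ ≤ x^2 + |x| * (Real.pi/2) := add_le_add h1 h2
    _ ≤ (1 + Real.pi/2) * |x| := by nlinarith [hx2]

lemma habs2 (x : ℝ) :
    |Real.sqrt (1 - x^2) + x * Real.arcsin x| ≤ 1 + |x| * (Real.pi/2) := by
  have harc : |Real.arcsin x| ≤ Real.pi/2 :=
    abs_le.2 ⟨by linarith [Real.neg_pi_div_two_le_arcsin x], Real.arcsin_le_pi_div_two x⟩
  have hs1 : Real.sqrt (1 - x^2) ≤ 1 := Real.sqrt_le_one.2 (by nlinarith [sq_nonneg x])
  calc |Real.sqrt (1 - x^2) + x * Real.arcsin x|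
      ≤ |Real.sqrt (1 - x^2)| + |x * Real.arcsin x| := abs_add_le _ _
    _ ≤ 1 + |x| * (Real.pi/2) := by
        apply add_le_add
        · rw [abs_of_nonneg (Real.sqrt_nonneg _)]; exact hs1
        · rw [abs_mul]; exact mul_le_mul_of_nonneg_left harc (abs_nonneg _)

lemma near_G {a u : ℝ} (ha : 0 < a) (hu0 : 0 < u) (hu1 : u < 1)
    (h4 : u^a * (4*(1+a)^2) ≤ 1) : 1/2 ≤ 1 - u^a - a*u^a*(1-u) := by
  have hua : 0 < u^a := Real.rpow_pos_of_pos hu0 _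
  have h1 : u^a * (4*(1+a)) ≤ 1 := by
    nlinarith [mul_nonneg (mul_nonneg hua.le ha.le) (by linarith : (0:ℝ) ≤ 1+a)]
  nlinarith [mul_nonneg (mul_nonneg ha.le hua.le) hu0.le]

lemma near_delta {a u : ℝ} (ha : 0 < a) (hu0 : 0 < u) (hu1 : u < 1)
    (hG2 : 1/2 ≤ 1 - u^a - a*u^a*(1-u)) :
    u^(a/2) * |u*(1 - u^a) - a*(1-u)| / (1 - u^a - a*u^a*(1-u)) ≤ 2*(1+a) * u^(a/2) := by
  have hua : 0 < u^a := Real.rpow_pos_of_pos hu0 _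
  have hua2 : 0 < u^(a/2) := Real.rpow_pos_of_pos hu0 _
  have hP : 0 < 1 - u^a := by
    have := Real.rpow_lt_one hu0.le hu1 ha; linarith
  have hG : 0 < 1 - u^a - a*u^a*(1-u) := by linarith
  have hNabs : |u*(1 - u^a) - a*(1-u)| ≤ 1 + a := by
    rw [abs_le]; constructor
    · nlinarith [mul_nonneg hu0.le hP.le]
    · nlinarith [mul_nonneg hu0.le hP.le, mul_le_one₀ hu1.le hP.le (by linarith : 1 - u^a ≤ 1)]
  rw [div_le_iff₀ hG]
  calc u^(a/2) * |u*(1 - u^a) - a*(1-u)| ≤ u^(a/2) * (1+a) :=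
        mul_le_mul_of_nonneg_left hNabs hua2.le
    _ = 2*(1+a) * u^(a/2) * (1/2) := by ring
    _ ≤ 2*(1+a) * u^(a/2) * (1 - u^a - a*u^a*(1-u)) := by
        apply mul_le_mul_of_nonneg_left hG2 (by positivity)

lemma near_S {a u : ℝ} (ha : 0 < a) (hu0 : 0 < u) (hu1 : u < 1)
    (h4 : u^a * (4*(1+a)^2) ≤ 1) :
    |(1 - u^a - a*(1-u)*u^a) / (1-u^a)^((3:ℝ)/2) - 1| ≤ 4*(1+a)*u^a := by
  have hua : 0 < u^a := Real.rpow_pos_of_pos hu0 _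
  have hP : 0 < 1 - u^a := by
    have := Real.rpow_lt_one hu0.le hu1 ha; linarith
  have hPow := pow32 hP
  have hD : 0 < (1-u^a) * Real.sqrt (1-u^a) := mul_pos hP (Real.sqrt_pos.2 hP)
  have hsqP1 : Real.sqrt (1-u^a) ≤ 1 := Real.sqrt_le_one.2 (by linarith)
  have hsqP2 : 1 - u^a ≤ Real.sqrt (1-u^a) := by
    rw [Real.le_sqrt hP.le hP.le]; nlinarith
  have hGnum : |(1 - u^a - a*(1-u)*u^a) - (1-u^a) * Real.sqrt (1-u^a)| ≤ (1+a)*u^a := by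
    rw [abs_le]; constructor
    · nlinarith [mul_le_mul_of_nonneg_left hsqP1 hP.le,
        mul_nonneg (mul_nonneg ha.le (by linarith : (0:ℝ) ≤ 1-u)) hua.le]
    · nlinarith [mul_le_mul_of_nonneg_left hsqP2 hP.le,
        mul_nonneg (mul_nonneg ha.le (by linarith : (0:ℝ) ≤ 1-u)) hua.le]
  have h34 : (1:ℝ)/2 ≤ 1 - u^a := by nlinarith [mul_nonneg hua.le ha.le, sq_nonneg a, mul_nonneg (mul_nonneg hua.le ha.le) ha.le]
  have hD14 : 1/4 ≤ (1-u^a) * Real.sqrt (1-u^a) := by nlinarith [hsqP2]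
  rw [hPow, div_sub_one hD.ne', abs_div, abs_of_pos hD, div_le_iff₀ hD]
  calc |1 - u^a - a*(1-u)*u^a - (1-u^a) * Real.sqrt (1-u^a)| ≤ (1+a)*u^a := hGnum
    _ = 4*(1+a)*u^a * (1/4) := by ring
    _ ≤ 4*(1+a)*u^a * ((1-u^a) * Real.sqrt (1-u^a)) := by
        apply mul_le_mul_of_nonneg_left hD14 (by positivity)

lemma near_f {a u x S C1 : ℝ} (ha : 0 < a) (hC1 : 0 < C1)
    (hx1 : |x| ≤ 1) (hxb : |x| ≤ 2*(1+a) * u^(a/2))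
    (hS0 : 0 ≤ S) (hSC1 : S ≤ C1) (hS1 : |S - 1| ≤ 4*(1+a)*u^a)
    (hua2 : u^a ≤ u^(a/2)) (hu2 : 0 ≤ u^(a/2)) :
    |(Real.sqrt (1 - x^2) + x * Real.arcsin x) * S - 1| ≤
      ((1+Real.pi/2)*(2*(1+a))*C1 + 4*(1+a)) * u^(a/2) := by
  have hpi : (0:ℝ) < 1 + Real.pi/2 := by positivity
  have key := habs1 hx1
  calc |(Real.sqrt (1 - x^2) + x * Real.arcsin x) * S - 1|
      = |(Real.sqrt (1 - x^2) + x * Real.arcsin x - 1) * S + (S - 1)| := by ring_nf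
    _ ≤ |(Real.sqrt (1 - x^2) + x * Real.arcsin x - 1) * S| + |S - 1| := abs_add_le _ _
    _ = |Real.sqrt (1 - x^2) + x * Real.arcsin x - 1| * S + |S - 1| := by
        rw [abs_mul, abs_of_nonneg hS0]
    _ ≤ ((1 + Real.pi/2) * |x|) * C1 + 4*(1+a)*u^a := by
        apply add_le_add _ hS1
        exact mul_le_mul key hSC1 hS0 (by positivity)
    _ ≤ ((1 + Real.pi/2) * (2*(1+a) * u^(a/2))) * C1 + 4*(1+a)*u^(a/2) := by
        apply add_le_add
        · apply mul_le_mul_of_nonneg_right _ hC1.le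
          exact mul_le_mul_of_nonneg_left hxb hpi.le
        · apply mul_le_mul_of_nonneg_left hua2 (by linarith)
    _ = ((1+Real.pi/2)*(2*(1+a))*C1 + 4*(1+a)) * u^(a/2) := by ring

lemma mid_delta {a δ u : ℝ} (ha : 0 < a) (hδ : 0 < δ) (hδu : δ ≤ u) (hu1 : u < 1)
    (hu2 : u^(a/2) ≤ 1) :
    u^(a/2) * |u*(1 - u^a) - a*(1-u)| / (1 - u^a - a*u^a*(1-u)) ≤
      ((1+a) * max a 1 / 2) / (a*(1+a)*(min (δ ^ (a-1)) 1)/2) := by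
  have hu0 : 0 < u := lt_of_lt_of_le hδ hδu
  have hCN : 0 < (1+a) * max a 1 / 2 := by
    have : (0:ℝ) < max a 1 := lt_max_of_lt_right one_pos
    positivity
  have hc' : 0 < a*(1+a)*(min (δ ^ (a-1)) 1)/2 := by
    have h1 : 0 < δ ^ (a-1) := Real.rpow_pos_of_pos hδ _
    have : (0:ℝ) < min (δ ^ (a-1)) 1 := lt_min h1 one_pos
    positivity
  have hG : 0 < 1 - u^a - a*u^a*(1-u) := by
    have h := g_pos ha hu0 hu1; nlinarith [h]
  have hGlow : a*(1+a)*(min (δ ^ (a-1)) 1)/2 * (1-u)^2 ≤ 1 - u^a - a*u^a*(1-u) := by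
    have h := F6 (δ := δ) ha hδ hδu hu1.le; nlinarith [h]
  have hNabs : |u*(1 - u^a) - a*(1-u)| ≤ (1+a) * max a 1 / 2 * (1-u)^2 := by
    have h3 := F3 ha hu0 hu1.le
    have h4 := F4 ha hu0 hu1.le
    rw [abs_le]; constructor
    · nlinarith [h4]
    · nlinarith [h3, mul_pos hCN (pow_pos (by linarith : (0:ℝ) < 1-u) 2)]
  rw [div_le_div_iff₀ hG hc']
  calc u^(a/2) * |u*(1 - u^a) - a*(1-u)| * (a*(1+a)*(min (δ ^ (a-1)) 1)/2)
      ≤ |u*(1 - u^a) - a*(1-u)| * (a*(1+a)*(min (δ ^ (a-1)) 1)/2) := by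
        apply mul_le_mul_of_nonneg_right _ hc'.le
        calc u^(a/2) * |u*(1 - u^a) - a*(1-u)| ≤ 1 * |u*(1 - u^a) - a*(1-u)| :=
              mul_le_mul_of_nonneg_right hu2 (abs_nonneg _)
          _ = |u*(1 - u^a) - a*(1-u)| := one_mul _
    _ ≤ ((1+a) * max a 1 / 2 * (1-u)^2) * (a*(1+a)*(min (δ ^ (a-1)) 1)/2) :=
        mul_le_mul_of_nonneg_right hNabs hc'.le
    _ = ((1+a) * max a 1 / 2) * (a*(1+a)*(min (δ ^ (a-1)) 1)/2 * (1-u)^2) := by ring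
    _ ≤ ((1+a) * max a 1 / 2) * (1 - u^a - a*u^a*(1-u)) :=
        mul_le_mul_of_nonneg_left hGlow hCN.le

lemma mid_f {x S C1 CΔ : ℝ} (hC1 : 0 ≤ C1) (hCΔ : 0 ≤ CΔ) (hx : |x| ≤ CΔ)
    (hS0 : 0 ≤ S) (hSC1 : S ≤ C1) :
    |(Real.sqrt (1 - x^2) + x * Real.arcsin x) * S - 1| ≤ (1 + CΔ*(Real.pi/2))*C1 + 1 := by
  have key := habs2 x
  calc |(Real.sqrt (1 - x^2) + x * Real.arcsin x) * S - 1|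
      ≤ |(Real.sqrt (1 - x^2) + x * Real.arcsin x) * S| + 1 := by
        simpa using abs_sub ((Real.sqrt (1 - x^2) + x * Real.arcsin x) * S) (1:ℝ)
    _ = |Real.sqrt (1 - x^2) + x * Real.arcsin x| * S + 1 := by
        rw [abs_mul, abs_of_nonneg hS0]
    _ ≤ (1 + |x| * (Real.pi/2)) * C1 + 1 := by
        apply add_le_add_left
        apply mul_le_mul key hSC1 hS0 (by positivity)
    _ ≤ (1 + CΔ*(Real.pi/2)) * C1 + 1 := by
        apply add_le_add_left
        apply mul_le_mul_of_nonneg_right _ hC1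
        have : |x| * (Real.pi/2) ≤ CΔ * (Real.pi/2) :=
          mul_le_mul_of_nonneg_right hx (by positivity)
        linarith

lemma f_bnd (τ : ℝ) (hτ : τ > -1/2)
    (Δ Sg f : ℝ → ℝ)
    (hΔ : ∀ u ∈ Set.Ioo (0:ℝ) 1, Δ u =
      u^(τ+1/2) * (u*(1 - u^(2*τ+1)) - (2*τ+1)*(1-u)) /
        (1 - u^(2*τ+1) - (2*τ+1)*u^(2*τ+1)*(1-u)))
    (hSg : ∀ u ∈ Set.Ioo (0:ℝ) 1, Sg u =
      (1 - u^(2*τ+1) - (2*τ+1)*(1-u)*u^(2*τ+1)) / (1 - u^(2*τ+1))^((3:ℝ)/2))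
    (hf : ∀ u ∈ Set.Ioo (0:ℝ) 1, f u =
      (Real.sqrt (1 - (Δ u)^2) + Δ u * Real.arcsin (Δ u)) * Sg u - 1) :
    ∃ C : ℝ, 0 < C ∧ ∀ u ∈ Set.Ioo (0:ℝ) 1, |f u| ≤ C * u ^ ((2*τ+1)/2) := by
  set a := 2*τ+1 with haa
  have ha : 0 < a := by rw [haa]; linarith
  have hexp : τ + 1/2 = a/2 := by rw [haa]; ring
  simp only [hexp] at hΔ
  clear_value a
  clear haa hτ
  -- constants
  set δ₀ : ℝ := (1/(4*(1+a)^2)) ^ ((1:ℝ)/a) with hδ₀def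
  have hbase : 0 < 1/(4*(1+a)^2) := by positivity
  have hδ₀ : 0 < δ₀ := Real.rpow_pos_of_pos hbase _
  have hδ₀1 : δ₀ < 1 := Real.rpow_lt_one hbase.le
    (by rw [div_lt_one (by positivity)]; nlinarith) (by positivity)
  have hδ₀a : δ₀ ^ a = 1/(4*(1+a)^2) := by
    rw [hδ₀def, ← Real.rpow_mul hbase.le, one_div_mul_cancel ha.ne', Real.rpow_one]
  set C1 : ℝ := (1+a)/Real.sqrt (min a 1) with hC1def
  have hC1 : 0 < C1 := div_pos (by linarith) (Real.sqrt_pos.2 (lt_min ha one_pos))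
  set CΔ : ℝ := ((1+a) * max a 1 / 2) / (a*(1+a)*(min (δ₀ ^ (a-1)) 1)/2) with hCΔdef
  have hCΔ : 0 < CΔ := by
    apply div_pos
    · have : (0:ℝ) < max a 1 := lt_max_of_lt_right one_pos
      positivity
    · have h1 : 0 < δ₀ ^ (a-1) := Real.rpow_pos_of_pos hδ₀ _
      have : (0:ℝ) < min (δ₀ ^ (a-1)) 1 := lt_min h1 one_pos
      positivity
  set M : ℝ := (1 + CΔ * (Real.pi/2)) * C1 + 1 with hMdef
  have hM : 0 < M := by positivity
  set Cnear : ℝ := (1+Real.pi/2) * (2*(1+a)) * C1 + 4*(1+a) with hCneardef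
  have hCnear : 0 < Cnear := by positivity
  clear_value δ₀ C1 CΔ M Cnear
  have hδpow : 0 < δ₀ ^ ((a:ℝ)/2) := Real.rpow_pos_of_pos hδ₀ _
  refine ⟨max Cnear (M / δ₀ ^ ((a:ℝ)/2)), lt_of_lt_of_le hCnear (le_max_left _ _), ?_⟩
  rintro u ⟨hu0, hu1⟩
  have hua : 0 < u ^ a := Real.rpow_pos_of_pos hu0 _
  have hua2 : 0 < u ^ (a/2) := Real.rpow_pos_of_pos hu0 _
  have hua2' : u ^ (a/2) ≤ 1 := Real.rpow_le_one hu0.le hu1.le (by positivity)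
  have hG : 0 < 1 - u^a - a*u^a*(1-u) := by
    have h : 0 < 1 - u ^ a - a * (u ^ a * (1-u)) := g_pos ha hu0 hu1
    linarith [h]
  -- Δ abs formula
  have hΔu := hΔ u ⟨hu0, hu1⟩
  have hΔabs : |Δ u| = u^(a/2) * |u*(1 - u^a) - a*(1-u)| / (1 - u^a - a*u^a*(1-u)) := by
    rw [hΔu, abs_div, abs_mul, abs_of_nonneg (Real.rpow_nonneg hu0.le _), abs_of_pos hG]
  -- Sg bounds
  have hSgu := hSg u ⟨hu0, hu1⟩
  have hSg0 : 0 ≤ Sg u := by rw [hSgu]; exact (sg_bound ha hu0 hu1).1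
  have hSgC1 : Sg u ≤ C1 := by rw [hSgu, hC1def]; exact (sg_bound ha hu0 hu1).2
  have hfu := hf u ⟨hu0, hu1⟩
  rcases le_total u δ₀ with hcase | hcase
  -- NEAR ZERO CASE
  · have h4 : u ^ a * (4*(1+a)^2) ≤ 1 := by
      have h1 : u ^ a ≤ δ₀ ^ a := Real.rpow_le_rpow hu0.le hcase ha.le
      rw [hδ₀a] at h1
      rw [← le_div_iff₀ (by positivity)]
      exact h1
    have hG2 := near_G ha hu0 hu1 h4
    have hΔnear : |Δ u| ≤ 2*(1+a) * u^(a/2) := by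
      rw [hΔabs]; exact near_delta ha hu0 hu1 hG2
    have hsq : u ^ (a/2) = Real.sqrt (u ^ a) := by
      rw [Real.sqrt_eq_rpow, ← Real.rpow_mul hu0.le]; ring_nf
    have h1 : u ^ (a/2) ≤ Real.sqrt (1/(4*(1+a)^2)) := by
      rw [hsq]
      apply Real.sqrt_le_sqrt
      rw [← hδ₀a]
      exact Real.rpow_le_rpow hu0.le hcase ha.le
    have h2 : Real.sqrt (1/(4*(1+a)^2)) = 1/(2*(1+a)) := by
      rw [show 1/(4*(1+a)^2) = (1/(2*(1+a)))^2 by field_simp; ring]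
      exact Real.sqrt_sq (by positivity)
    have hΔ1 : |Δ u| ≤ 1 := by
      refine hΔnear.trans ?_
      have h3 := mul_le_mul_of_nonneg_left (h1.trans h2.le) (by positivity : (0:ℝ) ≤ 2*(1+a))
      calc 2*(1+a) * u^(a/2) ≤ 2*(1+a)*(1/(2*(1+a))) := h3
        _ = 1 := by field_simp
    have hSnear : |Sg u - 1| ≤ 4*(1+a)*u^a := by
      rw [hSgu]; exact near_S ha hu0 hu1 h4
    have huaa2 : u^a ≤ u^(a/2) := Real.rpow_le_rpow_of_exponent_ge hu0 hu1.le (by linarith)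
    have hbig := near_f (x := Δ u) (S := Sg u) ha hC1 hΔ1 hΔnear hSg0 hSgC1 hSnear huaa2 hua2.le
    rw [hfu]
    calc |(Real.sqrt (1 - (Δ u)^2) + Δ u * Real.arcsin (Δ u)) * Sg u - 1|
        ≤ ((1+Real.pi/2)*(2*(1+a))*C1 + 4*(1+a)) * u^(a/2) := hbig
      _ = Cnear * u^(a/2) := by rw [hCneardef]
      _ ≤ max Cnear (M / δ₀ ^ ((a:ℝ)/2)) * u^(a/2) :=
          mul_le_mul_of_nonneg_right (le_max_left _ _) hua2.le
  -- MID CASE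
  · have hΔmid : |Δ u| ≤ CΔ := by
      rw [hΔabs, hCΔdef]; exact mid_delta ha hδ₀ hcase hu1 hua2'
    have hbig := mid_f (x := Δ u) (S := Sg u) hC1.le hCΔ.le hΔmid hSg0 hSgC1
    rw [hfu]
    calc |(Real.sqrt (1 - (Δ u)^2) + Δ u * Real.arcsin (Δ u)) * Sg u - 1|
        ≤ (1 + CΔ*(Real.pi/2))*C1 + 1 := hbig
      _ = M := hMdef.symm
      _ = M / δ₀ ^ ((a:ℝ)/2) * δ₀ ^ ((a:ℝ)/2) := by field_simp
      _ ≤ M / δ₀ ^ ((a:ℝ)/2) * u^(a/2) := by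
          apply mul_le_mul_of_nonneg_left (Real.rpow_le_rpow hδ₀.le hcase (by positivity)) (by positivity)
      _ ≤ max Cnear (M / δ₀ ^ ((a:ℝ)/2)) * u^(a/2) :=
          mul_le_mul_of_nonneg_right (le_max_right _ _) hua2.le

lemma sech_bound {a v : ℝ} (ha : 0 < a) (hv : 0 < v) :
    (((1/Real.cosh v)^2 : ℝ)) ^ (a/2) ≤ 2^a * Real.exp (-a*v) := by
  have hc : 0 < Real.cosh v := Real.cosh_pos v
  have hs : 0 < 1/Real.cosh v := by positivity
  have h1 : (((1/Real.cosh v)^2 : ℝ)) ^ (a/2) = (1/Real.cosh v) ^ a := by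
    rw [← Real.rpow_natCast (1/Real.cosh v) 2, ← Real.rpow_mul hs.le]
    norm_num
    rw [show (2:ℝ) * (a/2) = a by ring]
  have h2 : 1/Real.cosh v ≤ 2*Real.exp (-v) := by
    rw [div_le_iff₀ hc]
    have he : Real.exp (-v) * Real.exp v = 1 := by
      rw [← Real.exp_add]; simp
    rw [Real.cosh_eq]
    nlinarith [sq_nonneg (Real.exp (-v)), Real.exp_pos (-v), Real.exp_pos v]
  calc (((1/Real.cosh v)^2 : ℝ)) ^ (a/2) = (1/Real.cosh v) ^ a := h1
    _ ≤ (2*Real.exp (-v)) ^ a := Real.rpow_le_rpow hs.le h2 ha.le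
    _ = 2^a * Real.exp (-v) ^ a := Real.mul_rpow (by norm_num) (Real.exp_pos _).le
    _ = 2^a * Real.exp (-a*v) := by rw [← Real.exp_mul]; ring_nf

lemma sech_mem {v : ℝ} (hv : 0 < v) : ((1/Real.cosh v)^2 : ℝ) ∈ Set.Ioo (0:ℝ) 1 := by
  have hc : 1 < Real.cosh v := Real.one_lt_cosh.2 hv.ne'
  have hs : 0 < 1/Real.cosh v := by positivity
  constructor
  · positivity
  · have h1 : 1/Real.cosh v < 1 := by rw [div_lt_one (by linarith)]; exact hc
    nlinarith

lemma maj1 {a c : ℝ} (ha : 0 < a) :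
    IntegrableOn (fun v : ℝ => c * (2^a * Real.exp (-a*v))) (Set.Ioi 0) :=
  ((exp_neg_integrableOn_Ioi 0 ha).const_mul (2^a)).const_mul c

lemma maj2 {a c : ℝ} (ha : 0 < a) :
    IntegrableOn (fun v : ℝ => c * (2^a * (v * Real.exp (-a*v)))) (Set.Ioi 0) := by
  have base : IntegrableOn (fun x : ℝ => x ^ (1:ℝ) * Real.exp (-a * x ^ (1:ℝ))) (Set.Ioi 0) :=
    integrableOn_rpow_mul_exp_neg_mul_rpow (by norm_num) (by norm_num) ha
  simp only [Real.rpow_one] at base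
  exact (base.const_mul (2^a)).const_mul c

theorem stmt_16 (τ : ℝ) (hτ : τ > -1/2)
    (Δ Sg f : ℝ → ℝ)
    (hΔ : ∀ u ∈ Set.Ioo (0:ℝ) 1, Δ u =
      u^(τ+1/2) * (u*(1 - u^(2*τ+1)) - (2*τ+1)*(1-u)) /
        (1 - u^(2*τ+1) - (2*τ+1)*u^(2*τ+1)*(1-u)))
    (hSg : ∀ u ∈ Set.Ioo (0:ℝ) 1, Sg u =
      (1 - u^(2*τ+1) - (2*τ+1)*(1-u)*u^(2*τ+1)) / (1 - u^(2*τ+1))^((3:ℝ)/2))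
    (hf : ∀ u ∈ Set.Ioo (0:ℝ) 1, f u =
      (Real.sqrt (1 - (Δ u)^2) + Δ u * Real.arcsin (Δ u)) * Sg u - 1)
    (hf0 : f 0 = 0) (hf1 : f 1 = -1) :
    MeasureTheory.IntegrableOn (fun v : ℝ => |f ((1/Real.cosh v)^2)|) (Set.Ioi 0) ∧
    MeasureTheory.IntegrableOn (fun v : ℝ => v * |f ((1/Real.cosh v)^2)|) (Set.Ioi 0) := by
  obtain ⟨C, hC, hbound⟩ := f_bnd τ hτ Δ Sg f hΔ hSg hf
  set a := 2*τ+1 with haa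
  have ha : 0 < a := by rw [haa]; linarith
  -- explicit measurable version of f
  set D : ℝ → ℝ := fun u => u^(τ+1/2) * (u*(1 - u^(2*τ+1)) - (2*τ+1)*(1-u)) /
        (1 - u^(2*τ+1) - (2*τ+1)*u^(2*τ+1)*(1-u)) with hD
  set F : ℝ → ℝ := fun u =>
      (Real.sqrt (1 - (D u)^2) + D u * Real.arcsin (D u)) *
        ((1 - u^(2*τ+1) - (2*τ+1)*(1-u)*u^(2*τ+1)) / (1 - u^(2*τ+1))^((3:ℝ)/2)) - 1 with hF
  have hDm : Measurable D := by
    rw [hD]; fun_prop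
  have hFm : Measurable F := by
    rw [hF]
    apply Measurable.sub _ measurable_const
    apply Measurable.mul
    · apply Measurable.add
      · exact Real.continuous_sqrt.measurable.comp (measurable_const.sub (hDm.pow_const 2))
      · exact hDm.mul (Real.continuous_arcsin.measurable.comp hDm)
    · fun_prop
  have hfeq : ∀ u ∈ Set.Ioo (0:ℝ) 1, f u = F u := by
    intro u hu
    rw [hf u hu, hΔ u hu, hSg u hu, hF, hD]
  have hcont : Continuous fun v : ℝ => ((1/Real.cosh v)^2 : ℝ) := by
    apply Continuous.pow
    exact continuous_const.div Real.continuous_cosh (fun x => (Real.cosh_pos x).ne')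
  have hcomp : Measurable fun v : ℝ => F ((1/Real.cosh v)^2) := hFm.comp hcont.measurable
  have hae : (fun v : ℝ => |F ((1/Real.cosh v)^2)|) =ᵐ[volume.restrict (Set.Ioi 0)]
      (fun v : ℝ => |f ((1/Real.cosh v)^2)|) := by
    filter_upwards [self_mem_ae_restrict (measurableSet_Ioi : MeasurableSet (Set.Ioi (0:ℝ)))]
      with v hv
    rw [hfeq _ (sech_mem hv)]
  have hmeas1 : AEStronglyMeasurable (fun v : ℝ => |f ((1/Real.cosh v)^2)|)
      (volume.restrict (Set.Ioi 0)) :=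
    (hcomp.abs.aestronglyMeasurable).congr hae
  have hmeas2 : AEStronglyMeasurable (fun v : ℝ => v * |f ((1/Real.cosh v)^2)|)
      (volume.restrict (Set.Ioi 0)) :=
    aestronglyMeasurable_id.mul hmeas1
  have hkey : ∀ v ∈ Set.Ioi (0:ℝ), |f ((1/Real.cosh v)^2)| ≤ C * (2^a * Real.exp (-a*v)) := by
    intro v hv
    have hv0 : (0:ℝ) < v := hv
    have hmem := sech_mem hv0
    calc |f ((1/Real.cosh v)^2)| ≤ C * ((1/Real.cosh v)^2 : ℝ) ^ (a/2) := by
          have := hbound _ hmem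
          rw [show (2*τ+1)/2 = a/2 by rw [haa]] at this
          exact this
      _ ≤ C * (2^a * Real.exp (-a*v)) :=
          mul_le_mul_of_nonneg_left (sech_bound ha hv0) hC.le
  constructor
  · apply Integrable.mono' (maj1 (c := C) ha) hmeas1
    filter_upwards [self_mem_ae_restrict (measurableSet_Ioi : MeasurableSet (Set.Ioi (0:ℝ)))]
      with v hv
    rw [Real.norm_eq_abs, abs_abs]
    exact hkey v hv
  · apply Integrable.mono' (maj2 (c := C) ha) hmeas2
    filter_upwards [self_mem_ae_restrict (measurableSet_Ioi : MeasurableSet (Set.Ioi (0:ℝ)))]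
      with v hv
    have hv0 : (0:ℝ) < v := hv
    rw [Real.norm_eq_abs, abs_mul, abs_abs, abs_of_pos hv0]
    calc v * |f ((1/Real.cosh v)^2)| ≤ v * (C * (2^a * Real.exp (-a*v))) :=
          mul_le_mul_of_nonneg_left (hkey v hv) hv0.le
      _ = C * (2^a * (v * Real.exp (-a*v))) := by ring
end

section
/- Let τ be a fixed real number and define c_j = j^τ·(1 + (−1)^j/log j) for j ≥ 2. Then |c_j|/j^τ → 1 as j → ∞; however, for all sufficiently large n, there exists j with n − n·e^{−(log n)^{1/5}} ≤ j ≤ n − e^{(log n)^{1/5}} and n − j odd such that | |c_j|/|c_n| − 1 | ≥ (1/2)·e^{−log log n}. In particular the sequence (c_j) satisfies the polynomial asymptotics condition |c_j| = j^τ(1+o_j(1)) but not the concentration condition |c_j|/|c_n| − 1 = O(e^{−(log log n)^{1+ε}}) uniformly over that range of j, for any ε > 0. -/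
set_option maxHeartbeats 2000000

open Real Filter

private lemma ev_log19 (A : ℝ) : ∀ᶠ n : ℕ in atTop, A ≤ Real.log n :=
  (Real.tendsto_log_atTop.comp tendsto_natCast_atTop_atTop).eventually_ge_atTop A

private lemma ev_rpow19 (a A : ℝ) (ha : 0 < a) : ∀ᶠ n : ℕ in atTop, A ≤ (n:ℝ) ^ a :=
  ((tendsto_rpow_atTop ha).comp tendsto_natCast_atTop_atTop).eventually_ge_atTop A

private lemma key19 (τ : ℝ) (c : ℕ → ℝ)
    (hc : ∀ j : ℕ, 2 ≤ j → c j = (j:ℝ)^τ * (1 + (-1:ℝ)^j / Real.log j)) :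
    ∀ᶠ n : ℕ in atTop, ∃ j : ℕ,
      (n:ℝ) - (n:ℝ) * Real.exp (-(Real.log n)^((1:ℝ)/5)) ≤ (j:ℝ) ∧
      (j:ℝ) ≤ (n:ℝ) - Real.exp ((Real.log n)^((1:ℝ)/5)) ∧
      Odd (n - j) ∧
      (1/2) * Real.exp (-Real.log (Real.log n)) ≤ |(|c j| / |c n| - 1)| := by
  filter_upwards [ev_log19 64, ev_rpow19 ((3:ℝ)/8) (96*(|τ|+1)) (by norm_num),
    ev_rpow19 ((3:ℝ)/4) 3 (by norm_num), ev_rpow19 ((7:ℝ)/8) 12 (by norm_num)]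
    with n hL h38 h34 h78
  set L := Real.log n with hLdef
  have hL0 : (0:ℝ) < L := by linarith
  have hnpos : (0:ℝ) < (n:ℝ) := by
    by_contra h
    push_neg at h
    have : L ≤ 0 := Real.log_nonpos (Nat.cast_nonneg n) (by linarith)
    linarith
  have hn65 : (65:ℝ) ≤ (n:ℝ) := by
    have h1 : (n:ℝ) = Real.exp L := (Real.exp_log hnpos).symm
    have h2 : Real.exp 64 ≤ Real.exp L := Real.exp_le_exp.mpr hL
    have h3 : (64:ℝ) + 1 ≤ Real.exp 64 := Real.add_one_le_exp 64
    linarith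
  have hn1 : (1:ℝ) ≤ (n:ℝ) := by linarith
  -- g and E
  set g := L ^ ((1:ℝ)/5) with hgdef
  have hg1 : (1:ℝ) ≤ g := by
    rw [show (1:ℝ) = (1:ℝ) ^ ((1:ℝ)/5) from (Real.one_rpow _).symm]
    exact Real.rpow_le_rpow zero_le_one (by linarith) (by norm_num)
  have hgL : g ≤ L / 8 := by
    have e1 : g ≤ L ^ ((1:ℝ)/2) :=
      Real.rpow_le_rpow_of_exponent_le (by linarith) (by norm_num)
    have e2 : (8:ℝ) ≤ L ^ ((1:ℝ)/2) := by
      have h641 : ((64:ℝ) ^ ((1:ℝ)/2)) = 8 := by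
        rw [show (64:ℝ) = 8 ^ (2:ℕ) by norm_num, ← Real.rpow_natCast 8 2,
          ← Real.rpow_mul (by norm_num : (0:ℝ) ≤ 8)]
        norm_num
      have := Real.rpow_le_rpow (by norm_num : (0:ℝ) ≤ 64) hL (by norm_num : (0:ℝ) ≤ 1/2)
      linarith
    have e3 : L ^ ((1:ℝ)/2) * L ^ ((1:ℝ)/2) = L := by
      rw [← Real.rpow_add hL0]; norm_num
    nlinarith
  set E := Real.exp g with hEdef
  have hE2 : (2:ℝ) ≤ E := by
    have := Real.add_one_le_exp (1:ℝ)
    have h2 : Real.exp 1 ≤ E := Real.exp_le_exp.mpr hg1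
    linarith
  have hEn : E ≤ (n:ℝ) ^ ((1:ℝ)/8) := by
    rw [Real.rpow_def_of_pos hnpos]
    exact Real.exp_le_exp.mpr (by rw [← hLdef]; linarith)
  -- rpow splittings
  have hsplit18 : (n:ℝ)^((1:ℝ)/8) * (n:ℝ)^((7:ℝ)/8) = (n:ℝ) := by
    rw [← Real.rpow_add hnpos]; norm_num
  have hsplit38 : (n:ℝ)^((3:ℝ)/8) * (n:ℝ)^((1:ℝ)/2) = (n:ℝ)^((7:ℝ)/8) := by
    rw [← Real.rpow_add hnpos]; norm_num
  have hsplit34 : (n:ℝ)^((1:ℝ)/8) * (n:ℝ)^((3:ℝ)/4) = (n:ℝ)^((7:ℝ)/8) := by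
    rw [← Real.rpow_add hnpos]; norm_num
  have h18pos : (0:ℝ) < (n:ℝ)^((1:ℝ)/8) := Real.rpow_pos_of_pos hnpos _
  have h78pos : (0:ℝ) < (n:ℝ)^((7:ℝ)/8) := Real.rpow_pos_of_pos hnpos _
  have h12pos : (0:ℝ) < (n:ℝ)^((1:ℝ)/2) := Real.rpow_pos_of_pos hnpos _
  have h18ge1 : (1:ℝ) ≤ (n:ℝ)^((1:ℝ)/8) :=
    calc (1:ℝ) = (1:ℝ) ^ ((1:ℝ)/8) := (Real.one_rpow _).symm
    _ ≤ (n:ℝ)^((1:ℝ)/8) := Real.rpow_le_rpow zero_le_one hn1 (by norm_num)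
  have hlogn : L ≤ 2 * (n:ℝ)^((1:ℝ)/2) := by
    have h := Real.log_le_sub_one_of_pos h12pos
    rw [Real.log_rpow hnpos, ← hLdef] at h
    linarith
  -- choose d
  obtain ⟨d, hdodd, hdE, hdE2⟩ : ∃ d : ℕ, Odd d ∧ E ≤ (d:ℝ) ∧ (d:ℝ) ≤ E + 2 := by
    have hE0 : (0:ℝ) ≤ E := by linarith
    rcases Nat.even_or_odd ⌈E⌉₊ with hk | hk
    · refine ⟨⌈E⌉₊ + 1, hk.add_one, ?_, ?_⟩
      · push_cast
        linarith [Nat.le_ceil E]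
      · push_cast
        linarith [Nat.ceil_lt_add_one hE0]
    · exact ⟨⌈E⌉₊, hk, Nat.le_ceil E, by linarith [Nat.ceil_lt_add_one hE0]⟩
  have hd3 : (d:ℝ) ≤ 3 * (n:ℝ)^((1:ℝ)/8) := by linarith
  have hdn2 : (d:ℝ) ≤ (n:ℝ)/2 := by nlinarith
  have hdn : d ≤ n := by
    have : (d:ℝ) ≤ (n:ℝ) := by linarith
    exact_mod_cast this
  set j := n - d with hjdef
  have hjcast : (j:ℝ) = (n:ℝ) - (d:ℝ) := by
    rw [hjdef, Nat.cast_sub hdn]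
  have hj2 : (n:ℝ)/2 ≤ (j:ℝ) := by rw [hjcast]; linarith
  have hjpos : (0:ℝ) < (j:ℝ) := by linarith
  have hj2' : 2 ≤ j := by exact_mod_cast (by linarith : (2:ℝ) ≤ (j:ℝ))
  have hn2' : 2 ≤ n := by exact_mod_cast (by linarith : (2:ℝ) ≤ (n:ℝ))
  have hjn : (j:ℝ) ≤ (n:ℝ) := by rw [hjcast]; linarith
  set M := Real.log j with hMdef
  have hML : M ≤ L := Real.log_le_log hjpos hjn
  have hM2 : (2:ℝ) ≤ M := by
    have h1 : Real.log ((n:ℝ)/2) ≤ M := by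
      rw [hMdef]; exact Real.log_le_log (by linarith) hj2
    rw [Real.log_div (ne_of_gt hnpos) two_ne_zero, ← hLdef] at h1
    have hlog2 : Real.log 2 ≤ 1 := by
      linarith [Real.log_le_sub_one_of_pos (by norm_num : (0:ℝ) < 2)]
    linarith
  have hMpos : (0:ℝ) < M := by linarith
  have hjt : (0:ℝ) < (j:ℝ)^τ := Real.rpow_pos_of_pos hjpos τ
  have hnt : (0:ℝ) < (n:ℝ)^τ := Real.rpow_pos_of_pos hnpos τ
  set ρ := (j:ℝ)^τ / (n:ℝ)^τ with hrdef
  have hn3878 : (n:ℝ)^((3:ℝ)/8) ≤ (n:ℝ)^((7:ℝ)/8) :=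
    Real.rpow_le_rpow_of_exponent_le hn1 (by norm_num)
  have htau : (0:ℝ) < |τ| + 1 := by positivity
  have hδ : |ρ - 1| ≤ 1/(4*L) := by
    have hexp : ρ = Real.exp (Real.log ((j:ℝ)/(n:ℝ)) * τ) := by
      rw [hrdef, ← Real.div_rpow hjpos.le hnpos.le,
        Real.rpow_def_of_pos (div_pos hjpos hnpos)]
    have hlogji : Real.log ((j:ℝ)/(n:ℝ)) = M - L := by
      rw [Real.log_div (ne_of_gt hjpos) (ne_of_gt hnpos), ← hMdef, ← hLdef]
    have hLM : L - M ≤ (d:ℝ)/(j:ℝ) := by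
      have h := Real.log_le_sub_one_of_pos (div_pos hnpos hjpos)
      rw [Real.log_div (ne_of_gt hnpos) (ne_of_gt hjpos), ← hMdef, ← hLdef] at h
      have hnd : (n:ℝ)/(j:ℝ) - 1 = (d:ℝ)/(j:ℝ) := by
        field_simp
        linarith [hjcast]
      linarith
    have hdj : (d:ℝ)/(j:ℝ) ≤ 6 / (n:ℝ)^((7:ℝ)/8) := by
      rw [div_le_div_iff₀ hjpos h78pos]
      nlinarith
    have hxb : |Real.log ((j:ℝ)/(n:ℝ)) * τ| ≤ (|τ|+1) * (6 / (n:ℝ)^((7:ℝ)/8)) := by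
      rw [abs_mul, hlogji, abs_of_nonpos (by linarith : M - L ≤ 0)]
      have h6 : -(M - L) ≤ 6 / (n:ℝ)^((7:ℝ)/8) := by linarith
      have h60 : (0:ℝ) ≤ 6 / (n:ℝ)^((7:ℝ)/8) := by positivity
      calc -(M - L) * |τ| ≤ (6 / (n:ℝ)^((7:ℝ)/8)) * |τ| :=
            mul_le_mul_of_nonneg_right h6 (abs_nonneg τ)
        _ ≤ (|τ|+1) * (6 / (n:ℝ)^((7:ℝ)/8)) := by nlinarith [abs_nonneg τ]
    have hx1 : |Real.log ((j:ℝ)/(n:ℝ)) * τ| ≤ 1 := by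
      have : (|τ|+1) * (6 / (n:ℝ)^((7:ℝ)/8)) ≤ 1 := by
        rw [mul_div_assoc'] at *
        rw [div_le_one h78pos]
        nlinarith
      linarith
    have habs := Real.abs_exp_sub_one_le hx1
    rw [← hexp] at habs
    have hfin : 2 * ((|τ|+1) * (6 / (n:ℝ)^((7:ℝ)/8))) ≤ 1/(4*L) := by
      rw [show 2 * ((|τ|+1) * (6 / (n:ℝ)^((7:ℝ)/8))) = (48*(|τ|+1))/(4*((n:ℝ)^((7:ℝ)/8))) by
        field_simp; ring, div_le_div_iff₀ (by positivity) (by positivity)]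
      have a1 : 48*(|τ|+1)*L ≤ 48*(|τ|+1)*(2*(n:ℝ)^((1:ℝ)/2)) :=
        mul_le_mul_of_nonneg_left hlogn (by positivity)
      have a2 : 96*(|τ|+1)*(n:ℝ)^((1:ℝ)/2) ≤ (n:ℝ)^((3:ℝ)/8)*(n:ℝ)^((1:ℝ)/2) :=
        mul_le_mul_of_nonneg_right h38 h12pos.le
      linarith [a1, a2, hsplit38]
    calc |ρ - 1| ≤ 2 * |Real.log ((j:ℝ)/(n:ℝ)) * τ| := habs
      _ ≤ 2 * ((|τ|+1) * (6 / (n:ℝ)^((7:ℝ)/8))) := by linarith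
      _ ≤ 1/(4*L) := hfin
  have hrpos : (0:ℝ) < ρ := div_pos hjt hnt
  have hδ' := abs_le.mp hδ
  have hinvL : (0:ℝ) < 1/L := by positivity
  have hinvL64 : 1/L ≤ 1/64 := by
    rw [div_le_div_iff₀ hL0 (by norm_num)]; linarith
  have hinvML : 1/L ≤ 1/M := by
    rw [div_le_div_iff₀ hL0 hMpos]; linarith
  have hinvM : (0:ℝ) < 1/M := by positivity
  have hinvM2 : 1/M ≤ 1/2 := by
    rw [div_le_div_iff₀ hMpos (by norm_num)]; linarith
  have hnadd : n = j + d := by omega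
  have hen : ((-1:ℝ))^n = -((-1:ℝ))^j := by
    rw [hnadd, pow_add, hdodd.neg_one_pow]; ring
  have hcj : c j = (j:ℝ)^τ * (1 + (-1:ℝ)^j / M) := by
    rw [hc j hj2', ← hMdef]
  have hcn : c n = (n:ℝ)^τ * (1 - (-1:ℝ)^j / L) := by
    rw [hc n hn2', ← hLdef, hen]; ring
  have hhalf : (1/2:ℝ) * Real.exp (-Real.log L) = 1/(2*L) := by
    rw [Real.exp_neg, Real.exp_log hL0]; ring
  clear_value L g E j M ρ
  refine ⟨j, ?_, ?_, ?_, ?_⟩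
  · -- lower bound
    rw [Real.exp_neg, ← hEdef, hjcast]
    have hE0 : (0:ℝ) < E := by linarith
    have hdE' : (d:ℝ) * E ≤ (n:ℝ) := by
      have e14 : (n:ℝ)^((1:ℝ)/8) * (n:ℝ)^((1:ℝ)/8) = (n:ℝ)^((1:ℝ)/4) := by
        rw [← Real.rpow_add hnpos]; norm_num
      have e144 : (n:ℝ)^((1:ℝ)/4) * (n:ℝ)^((3:ℝ)/4) = (n:ℝ) := by
        rw [← Real.rpow_add hnpos]; norm_num
      have h14pos : (0:ℝ) < (n:ℝ)^((1:ℝ)/4) := Real.rpow_pos_of_pos hnpos _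
      have b1 : (d:ℝ)*E ≤ (3*(n:ℝ)^((1:ℝ)/8)) * ((n:ℝ)^((1:ℝ)/8)) :=
        mul_le_mul hd3 hEn (by linarith) (by positivity)
      have b2 : 3*(n:ℝ)^((1:ℝ)/4) ≤ (n:ℝ)^((3:ℝ)/4) * (n:ℝ)^((1:ℝ)/4) :=
        mul_le_mul_of_nonneg_right h34 h14pos.le
      linarith [b1, b2, e14, e144]
    have : (d:ℝ) ≤ (n:ℝ) * E⁻¹ := by
      rw [← div_eq_mul_inv, le_div_iff₀ hE0]; exact hdE'
    linarith
  · -- upper bound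
    rw [hjcast]
    linarith
  · -- odd
    rw [hjdef, Nat.sub_sub_self hdn]
    exact hdodd
  · -- main estimate
    rw [hhalf]
    clear * - hinvM2 hδ' hrpos hinvL hinvL64 hinvML hinvM hM2 hML hL hL0 hMpos hcj hcn hjt hnt hrdef
    rcases Nat.even_or_odd j with hpar | hpar
    · -- j even : Q ≥ 1 + 1/(2L)
      rw [hpar.neg_one_pow] at hcj hcn
      have hApos : (0:ℝ) < 1 + 1/M := by linarith
      have hBpos : (0:ℝ) < 1 - 1/L := by linarith
      have hA : |c j| = (j:ℝ)^τ * (1 + 1/M) := by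
        rw [hcj, abs_of_pos (mul_pos hjt (by linarith))]
      have hB : |c n| = (n:ℝ)^τ * (1 - 1/L) := by
        rw [hcn, abs_of_pos (mul_pos hnt (by linarith))]
      have hQ : |c j| / |c n| = ρ * ((1 + 1/M)/(1 - 1/L)) := by
        rw [hA, hB, hrdef, mul_div_mul_comm]
      have hS : 1 + 1/L ≤ (1 + 1/M)/(1 - 1/L) := by
        rw [le_div_iff₀ hBpos]
        nlinarith [mul_pos hinvL hinvL]
      have hQ2 : (1 - 1/(4*L)) * (1 + 1/L) ≤ |c j| / |c n| := by
        rw [hQ]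
        apply mul_le_mul (by linarith) hS (by linarith) hrpos.le
      have hfin : 1/(2*L) ≤ |c j| / |c n| - 1 := by
        have hlq : 1/(4*L) = (1/L)/4 := by ring
        have hlq2 : 1/(2*L) = (1/L)/2 := by ring
        nlinarith [hinvL, hinvL64, mul_pos hinvL hinvL]
      exact le_trans hfin (le_abs_self _)
    · -- j odd : Q ≤ 1 - 1/(2L)
      rw [hpar.neg_one_pow] at hcj hcn
      have hApos : (0:ℝ) < 1 - 1/M := by linarith
      have hBpos : (0:ℝ) < 1 + 1/L := by linarith
      have hA : |c j| = (j:ℝ)^τ * (1 - 1/M) := by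
        rw [hcj, show (1 + (-1:ℝ)/M) = 1 - 1/M by ring,
          abs_of_pos (mul_pos hjt hApos)]
      have hB : |c n| = (n:ℝ)^τ * (1 + 1/L) := by
        rw [hcn, show (1 - (-1:ℝ)/L) = 1 + 1/L by ring,
          abs_of_pos (mul_pos hnt hBpos)]
      have hQ : |c j| / |c n| = ρ * ((1 - 1/M)/(1 + 1/L)) := by
        rw [hA, hB, hrdef, mul_div_mul_comm]
      have hS : (1 - 1/M)/(1 + 1/L) ≤ 1 - 1/L := by
        rw [div_le_iff₀ hBpos]
        nlinarith [mul_pos hinvL hinvL]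
      have hS0 : (0:ℝ) ≤ (1 - 1/M)/(1 + 1/L) := by positivity
      have hQ2 : |c j| / |c n| ≤ (1 + 1/(4*L)) * (1 - 1/L) := by
        rw [hQ, mul_comm ρ _, mul_comm (1 + 1/(4*L)) _]
        apply mul_le_mul hS (by linarith) hrpos.le (by linarith)
      have hfin : 1/(2*L) ≤ -(|c j| / |c n| - 1) := by
        have hlq : 1/(4*L) = (1/L)/4 := by ring
        have hlq2 : 1/(2*L) = (1/L)/2 := by ring
        nlinarith [hinvL, hinvL64, mul_pos hinvL hinvL]
      exact le_trans hfin (neg_le_abs _)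

theorem stmt_19 (τ : ℝ)
    (c : ℕ → ℝ)
    (hc : ∀ j : ℕ, 2 ≤ j → c j = (j:ℝ)^τ * (1 + (-1:ℝ)^j / Real.log j)) :
    Filter.Tendsto (fun j : ℕ => |c j| / (j:ℝ)^τ) Filter.atTop (nhds 1) ∧
    (∃ N : ℕ, ∀ n : ℕ, N ≤ n → ∃ j : ℕ,
      (n:ℝ) - (n:ℝ) * Real.exp (-(Real.log n)^((1:ℝ)/5)) ≤ (j:ℝ) ∧
      (j:ℝ) ≤ (n:ℝ) - Real.exp ((Real.log n)^((1:ℝ)/5)) ∧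
      Odd (n - j) ∧
      (1/2) * Real.exp (-Real.log (Real.log n)) ≤ abs (|c j| / |c n| - 1)) ∧
    (∀ ε : ℝ, 0 < ε → ¬ ∃ C : ℝ, ∃ N : ℕ, ∀ n : ℕ, N ≤ n → ∀ j : ℕ,
      ((n:ℝ) - (n:ℝ) * Real.exp (-(Real.log n)^((1:ℝ)/5)) ≤ (j:ℝ) ∧
       (j:ℝ) ≤ (n:ℝ) - Real.exp ((Real.log n)^((1:ℝ)/5))) →
      abs (|c j| / |c n| - 1) ≤ C * Real.exp (-(Real.log (Real.log n))^(1+ε))) := by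
  refine ⟨?_, ?_, ?_⟩
  · -- part 1
    have h0 : Filter.Tendsto (fun j : ℕ => (Real.log j)⁻¹) atTop (nhds 0) :=
      (Real.tendsto_log_atTop.comp tendsto_natCast_atTop_atTop).inv_tendsto_atTop
    have h1 : Filter.Tendsto (fun j : ℕ => (-1:ℝ)^j / Real.log j) atTop (nhds 0) := by
      apply squeeze_zero_norm' _ h0
      filter_upwards [eventually_ge_atTop 2] with j hj
      have hlogpos : (0:ℝ) < Real.log j :=
        Real.log_pos (by exact_mod_cast Nat.lt_of_lt_of_le one_lt_two hj)
      rw [Real.norm_eq_abs, abs_div, abs_pow, abs_neg, abs_one, one_pow,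
        abs_of_pos hlogpos, one_div]
    have h2 : Filter.Tendsto (fun j : ℕ => |1 + (-1:ℝ)^j / Real.log j|) atTop (nhds 1) := by
      have h3 : Filter.Tendsto (fun j : ℕ => 1 + (-1:ℝ)^j / Real.log j) atTop (nhds 1) := by
        have := (tendsto_const_nhds (x := (1:ℝ)) (f := atTop)).add h1
        simpa using this
      have := h3.abs
      simpa using this
    apply h2.congr'
    filter_upwards [eventually_ge_atTop 2] with j hj
    have hjpos : (0:ℝ) < (j:ℝ) := by
      have : 0 < j := by omega
      exact_mod_cast this
    have hpow : (0:ℝ) < (j:ℝ)^τ := Real.rpow_pos_of_pos hjpos τ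
    rw [hc j hj, abs_mul, abs_of_pos hpow, mul_comm, mul_div_assoc,
      div_self (ne_of_gt hpow), mul_one]
  · obtain ⟨N, hN⟩ := eventually_atTop.mp (key19 τ c hc)
    exact ⟨N, hN⟩
  · rintro ε hε ⟨C, N, hC⟩
    have ht : Filter.Tendsto (fun n : ℕ => Real.log (Real.log n)) atTop atTop :=
      (Real.tendsto_log_atTop.comp Real.tendsto_log_atTop).comp tendsto_natCast_atTop_atTop
    have hu : Filter.Tendsto (fun s : ℝ => s ^ (1+ε) - s) atTop atTop := by
      apply tendsto_atTop_mono' atTop _ tendsto_id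
      filter_upwards [eventually_ge_atTop 1,
        (tendsto_rpow_atTop hε).eventually_ge_atTop 2] with s hs1 hs2
      have hs0 : (0:ℝ) < s := by linarith
      have hadd : s ^ (1+ε) = s * s ^ ε := by
        rw [Real.rpow_add hs0, Real.rpow_one]
      simp only [id_eq]
      rw [hadd]
      nlinarith
    have hev : ∀ᶠ n : ℕ in atTop,
        |C| < (1/2) * Real.exp ((Real.log (Real.log n)) ^ (1+ε) - Real.log (Real.log n)) := by
      filter_upwards [(hu.comp ht).eventually_ge_atTop (Real.log (2*|C|+1))] with n hn
      have h1 : 2*|C|+1 ≤ Real.exp ((Real.log (Real.log n)) ^ (1+ε) - Real.log (Real.log n)) := by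
        calc 2*|C|+1 = Real.exp (Real.log (2*|C|+1)) := (Real.exp_log (by positivity)).symm
          _ ≤ _ := Real.exp_le_exp.mpr hn
      nlinarith [abs_nonneg C]
    obtain ⟨n, hnk, hnN, hne⟩ := ((key19 τ c hc).and ((eventually_ge_atTop N).and hev)).exists
    obtain ⟨j, hr1, hr2, _, hlow⟩ := hnk
    have hub := hC n hnN j ⟨hr1, hr2⟩
    set t := Real.log (Real.log n) with htdef
    have hkey : C * Real.exp (-t^(1+ε)) < (1/2) * Real.exp (-t) := by
      have hpos : (0:ℝ) < Real.exp (-t^(1+ε)) := Real.exp_pos _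
      have h1 : C * Real.exp (-t^(1+ε)) ≤ |C| * Real.exp (-t^(1+ε)) :=
        mul_le_mul_of_nonneg_right (le_abs_self C) hpos.le
      have h2 : |C| * Real.exp (-t^(1+ε)) <
          (1/2) * Real.exp (t^(1+ε) - t) * Real.exp (-t^(1+ε)) :=
        mul_lt_mul_of_pos_right hne hpos
      have h3 : Real.exp (t^(1+ε) - t) * Real.exp (-t^(1+ε)) = Real.exp (-t) := by
        rw [← Real.exp_add]; ring_nf
      calc C * Real.exp (-t^(1+ε)) ≤ |C| * Real.exp (-t^(1+ε)) := h1
        _ < (1/2) * Real.exp (t^(1+ε) - t) * Real.exp (-t^(1+ε)) := h2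
        _ = (1/2) * Real.exp (-t) := by rw [mul_assoc, h3]
    linarith
end
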